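/- arXiv:2505.22174 — 8 statements merged into one kernel-verified Lean document; each statement's English description precedes it below -/
import Mathlib

section
/- For every real ε > 0 and every deterministic online allocation algorithm F for n = 2 agents, there exist a 2-value stream v with v t i ∈ {1, 5} for all t ∈ ℕ and both agents i, and a time step T with 1 ≤ T ≤ 5, such that the allocation induced by F at the end of time step T is not (1/2 + ε)-EF1; that is, there exist agents i, j such that for every X ⊆ A_j^T with |X| ≤ 1, v_i(A_i^T) < (1/2 + ε) · Σ_{t ∈ A_j^T ∖ X} v t i. -/
open Finset

noncomputable section

/-- The agent to whom good `t` is assigned by the deterministic online algorithm `F`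
on stream `v`: `σ(t) = F [v 0, …, v t]`. -/
def alloc (n : ℕ) (F : List (Fin n → NNReal) → Fin n) (v : ℕ → Fin n → NNReal) (t : ℕ) : Fin n :=
  F ((List.range (t + 1)).map v)

/-- The bundle of agent `i` at the end of time step `T`. -/
def bundle (n : ℕ) (F : List (Fin n → NNReal) → Fin n) (v : ℕ → Fin n → NNReal)
    (i : Fin n) (T : ℕ) : Finset ℕ :=
  (Finset.range T).filter fun t => alloc n F v t = i

/-- The (real) value of the bundle `B` for agent `i`. -/
def bval (n : ℕ) (v : ℕ → Fin n → NNReal) (i : Fin n) (B : Finset ℕ) : ℝ :=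
  ∑ t ∈ B, (v t i : ℝ)

/-! ### Auxiliary definitions for the adversarial stream -/

def ones : Fin 2 → NNReal := fun _ => 1
def fives : Fin 2 → NNReal := fun _ => 5
def pick (c : Fin 2) : Fin 2 → NNReal := fun i => if i = c then 5 else 1

def advStream (F : List (Fin 2 → NNReal) → Fin 2) : ℕ → Fin 2 → NNReal
  | 0 => ones
  | 1 => pick (F [ones])
  | 2 => ones
  | 3 => pick (F [ones, pick (F [ones]), ones])
  | 4 => fives
  | _ => ones

lemma adv_vals (F : List (Fin 2 → NNReal) → Fin 2) (t : ℕ) (i : Fin 2) :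
    advStream F t i = 1 ∨ advStream F t i = 5 := by
  have hp : ∀ c : Fin 2, pick c i = 1 ∨ pick c i = 5 := by
    intro c; unfold pick; split <;> simp
  rcases t with _|_|_|_|_|t <;> simp [advStream, ones, fives, hp]

lemma bundle_zero (F : List (Fin 2 → NNReal) → Fin 2) (v : ℕ → Fin 2 → NNReal) (i : Fin 2) :
    bundle 2 F v i 0 = ∅ := rfl

lemma bundle_succ (F : List (Fin 2 → NNReal) → Fin 2) (v : ℕ → Fin 2 → NNReal) (i : Fin 2)
    (T : ℕ) :
    bundle 2 F v i (T + 1) =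
      if alloc 2 F v T = i then insert T (bundle 2 F v i T) else bundle 2 F v i T := by
  simp [bundle, Finset.range_add_one, Finset.filter_insert]

lemma fin2 (x : Fin 2) : x = 0 ∨ x = 1 := by omega

lemma key (ε : ℝ) (hε : 0 < ε) (F : List (Fin 2 → NNReal) → Fin 2) (v : ℕ → Fin 2 → NNReal)
    (i j : Fin 2) (T : ℕ) (Bj : Finset ℕ) (hBj : bundle 2 F v j T = Bj)
    (oi M bj : ℝ) (hoi : bval 2 v i (bundle 2 F v i T) = oi)
    (hbj : bval 2 v i Bj = bj)
    (hM : ∀ t ∈ Bj, (v t i : ℝ) ≤ M) (hM0 : 0 ≤ M)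
    (h1 : 2 * oi ≤ bj - M) (h2 : 0 < bj - M) :
    ∀ X ⊆ bundle 2 F v j T, X.card ≤ 1 →
      bval 2 v i (bundle 2 F v i T) < (1 / 2 + ε) * bval 2 v i (bundle 2 F v j T \ X) := by
  rw [hBj, hoi]
  intro X hX hc
  have hsd : bval 2 v i (Bj \ X) = bj - bval 2 v i X := by
    rw [← hbj]; exact Finset.sum_sdiff_eq_sub hX
  have hXle : bval 2 v i X ≤ M := by
    have hs := Finset.sum_le_card_nsmul X (fun t => (v t i : ℝ)) M (fun t ht => hM t (hX ht))
    have h' : (X.card : ℝ) * M ≤ 1 * M := by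
      apply mul_le_mul_of_nonneg_right _ hM0
      exact_mod_cast hc
    calc bval 2 v i X ≤ X.card • M := hs
      _ = (X.card : ℝ) * M := by simp [nsmul_eq_mul]
      _ ≤ 1 * M := h'
      _ = M := one_mul M
  have hR : bj - M ≤ bval 2 v i (Bj \ X) := by rw [hsd]; linarith
  nlinarith [mul_le_mul_of_nonneg_left hR (le_of_lt hε)]

/-- For every `ε > 0` and every deterministic online allocation algorithm for two agents,
there is a stream with values in `{1, 5}` and a time step `1 ≤ T ≤ 5` at the end of which the
induced allocation is not `(1/2 + ε)`-EF1. -/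
theorem statement0 (ε : ℝ) (hε : 0 < ε) (F : List (Fin 2 → NNReal) → Fin 2) :
    ∃ v : ℕ → Fin 2 → NNReal,
      (∀ (t : ℕ) (i : Fin 2), v t i = 1 ∨ v t i = 5) ∧
      ∃ T : ℕ, 1 ≤ T ∧ T ≤ 5 ∧
        ∃ i j : Fin 2,
          ∀ X ⊆ bundle 2 F v j T, X.card ≤ 1 →
            bval 2 v i (bundle 2 F v i T) <
              (1 / 2 + ε) * bval 2 v i (bundle 2 F v j T \ X) := by
  refine ⟨advStream F, adv_vals F, ?_⟩
  have e0 : alloc 2 F (advStream F) 0 = F [ones] := by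
    simp [alloc, List.range_succ, advStream]
  have e1 : alloc 2 F (advStream F) 1 = F [ones, pick (F [ones])] := by
    simp [alloc, List.range_succ, advStream]
  have e2 : alloc 2 F (advStream F) 2 = F [ones, pick (F [ones]), ones] := by
    simp [alloc, List.range_succ, advStream]
  have e3 : alloc 2 F (advStream F) 3 =
      F [ones, pick (F [ones]), ones, pick (F [ones, pick (F [ones]), ones])] := by
    simp [alloc, List.range_succ, advStream]
  have e4 : alloc 2 F (advStream F) 4 =
      F [ones, pick (F [ones]), ones, pick (F [ones, pick (F [ones]), ones]), fives] := by
    simp [alloc, List.range_succ, advStream]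
  rcases fin2 (F [ones]) with ha | ha
  · rw [ha] at e0 e1 e2 e3 e4
    rcases fin2 (F [ones, pick 0]) with hb | hb
    · rw [hb] at e1
      refine ⟨2, by norm_num, by norm_num, 1, 0,
        key ε hε F (advStream F) 1 0 2 {1,0} ?_ 0 1 2 ?_ ?_ ?_ (by norm_num) (by norm_num) (by norm_num)⟩
      · simp [bundle_succ, bundle_zero, e0, e1]
      · simp [bundle_succ, bundle_zero, e0, e1, bval, advStream, ones, fives, pick, ha, hb] <;>
          norm_num
      · norm_num [bval, advStream, ones, fives, pick, ha, hb]
      · norm_num [advStream, ones, fives, pick, ha, hb]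
    · rw [hb] at e1
      rcases fin2 (F [ones, pick 0, ones]) with hc | hc
      · rw [hc] at e2 e3 e4
        rcases fin2 (F [ones, pick 0, ones, pick 0]) with hd | hd
        · rw [hd] at e3
          refine ⟨4, by norm_num, by norm_num, 1, 0,
            key ε hε F (advStream F) 1 0 4 {3,2,0} ?_ 1 1 3 ?_ ?_ ?_ (by norm_num) (by norm_num) (by norm_num)⟩
          · simp [bundle_succ, bundle_zero, e0, e1, e2, e3]
          · simp [bundle_succ, bundle_zero, e0, e1, e2, e3, bval, advStream, ones, fives, pick, ha, hb, hc, hd] <;>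
              norm_num
          · norm_num [bval, advStream, ones, fives, pick, ha, hb, hc, hd]
          · norm_num [advStream, ones, fives, pick, ha, hb, hc, hd]
        · rw [hd] at e3
          refine ⟨4, by norm_num, by norm_num, 0, 1,
            key ε hε F (advStream F) 0 1 4 {3,1} ?_ 2 5 10 ?_ ?_ ?_ (by norm_num) (by norm_num) (by norm_num)⟩
          · simp [bundle_succ, bundle_zero, e0, e1, e2, e3]
          · simp [bundle_succ, bundle_zero, e0, e1, e2, e3, bval, advStream, ones, fives, pick, ha, hb, hc, hd] <;>
              norm_num
          · norm_num [bval, advStream, ones, fives, pick, ha, hb, hc, hd]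
          · norm_num [advStream, ones, fives, pick, ha, hb, hc, hd]
      · rw [hc] at e2 e3 e4
        rcases fin2 (F [ones, pick 0, ones, pick 1]) with hd | hd
        · rw [hd] at e3
          rcases fin2 (F [ones, pick 0, ones, pick 1, fives]) with he | he
          · rw [he] at e4
            refine ⟨5, by norm_num, by norm_num, 1, 0,
              key ε hε F (advStream F) 1 0 5 {4,3,0} ?_ 2 5 11 ?_ ?_ ?_ (by norm_num) (by norm_num) (by norm_num)⟩
            · simp [bundle_succ, bundle_zero, e0, e1, e2, e3, e4]
            · simp [bundle_succ, bundle_zero, e0, e1, e2, e3, e4, bval, advStream, ones, fives, pick, ha, hb, hc, hd, he] <;>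
                norm_num
            · norm_num [bval, advStream, ones, fives, pick, ha, hb, hc, hd, he]
            · norm_num [advStream, ones, fives, pick, ha, hb, hc, hd, he]
          · rw [he] at e4
            refine ⟨5, by norm_num, by norm_num, 0, 1,
              key ε hε F (advStream F) 0 1 5 {4,2,1} ?_ 2 5 11 ?_ ?_ ?_ (by norm_num) (by norm_num) (by norm_num)⟩
            · simp [bundle_succ, bundle_zero, e0, e1, e2, e3, e4]
            · simp [bundle_succ, bundle_zero, e0, e1, e2, e3, e4, bval, advStream, ones, fives, pick, ha, hb, hc, hd, he] <;>
                norm_num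
            · norm_num [bval, advStream, ones, fives, pick, ha, hb, hc, hd, he]
            · norm_num [advStream, ones, fives, pick, ha, hb, hc, hd, he]
        · rw [hd] at e3
          refine ⟨4, by norm_num, by norm_num, 0, 1,
            key ε hε F (advStream F) 0 1 4 {3,2,1} ?_ 1 5 7 ?_ ?_ ?_ (by norm_num) (by norm_num) (by norm_num)⟩
          · simp [bundle_succ, bundle_zero, e0, e1, e2, e3]
          · simp [bundle_succ, bundle_zero, e0, e1, e2, e3, bval, advStream, ones, fives, pick, ha, hb, hc, hd] <;>
              norm_num
          · norm_num [bval, advStream, ones, fives, pick, ha, hb, hc, hd]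
          · norm_num [advStream, ones, fives, pick, ha, hb, hc, hd]
  · rw [ha] at e0 e1 e2 e3 e4
    rcases fin2 (F [ones, pick 1]) with hb | hb
    · rw [hb] at e1
      rcases fin2 (F [ones, pick 1, ones]) with hc | hc
      · rw [hc] at e2 e3 e4
        rcases fin2 (F [ones, pick 1, ones, pick 0]) with hd | hd
        · rw [hd] at e3
          refine ⟨4, by norm_num, by norm_num, 1, 0,
            key ε hε F (advStream F) 1 0 4 {3,2,1} ?_ 1 5 7 ?_ ?_ ?_ (by norm_num) (by norm_num) (by norm_num)⟩
          · simp [bundle_succ, bundle_zero, e0, e1, e2, e3]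
          · simp [bundle_succ, bundle_zero, e0, e1, e2, e3, bval, advStream, ones, fives, pick, ha, hb, hc, hd] <;>
              norm_num
          · norm_num [bval, advStream, ones, fives, pick, ha, hb, hc, hd]
          · norm_num [advStream, ones, fives, pick, ha, hb, hc, hd]
        · rw [hd] at e3
          rcases fin2 (F [ones, pick 1, ones, pick 0, fives]) with he | he
          · rw [he] at e4
            refine ⟨5, by norm_num, by norm_num, 1, 0,
              key ε hε F (advStream F) 1 0 5 {4,2,1} ?_ 2 5 11 ?_ ?_ ?_ (by norm_num) (by norm_num) (by norm_num)⟩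
            · simp [bundle_succ, bundle_zero, e0, e1, e2, e3, e4]
            · simp [bundle_succ, bundle_zero, e0, e1, e2, e3, e4, bval, advStream, ones, fives, pick, ha, hb, hc, hd, he] <;>
                norm_num
            · norm_num [bval, advStream, ones, fives, pick, ha, hb, hc, hd, he]
            · norm_num [advStream, ones, fives, pick, ha, hb, hc, hd, he]
          · rw [he] at e4
            refine ⟨5, by norm_num, by norm_num, 0, 1,
              key ε hε F (advStream F) 0 1 5 {4,3,0} ?_ 2 5 11 ?_ ?_ ?_ (by norm_num) (by norm_num) (by norm_num)⟩
            · simp [bundle_succ, bundle_zero, e0, e1, e2, e3, e4]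
            · simp [bundle_succ, bundle_zero, e0, e1, e2, e3, e4, bval, advStream, ones, fives, pick, ha, hb, hc, hd, he] <;>
                norm_num
            · norm_num [bval, advStream, ones, fives, pick, ha, hb, hc, hd, he]
            · norm_num [advStream, ones, fives, pick, ha, hb, hc, hd, he]
      · rw [hc] at e2 e3 e4
        rcases fin2 (F [ones, pick 1, ones, pick 1]) with hd | hd
        · rw [hd] at e3
          refine ⟨4, by norm_num, by norm_num, 1, 0,
            key ε hε F (advStream F) 1 0 4 {3,1} ?_ 2 5 10 ?_ ?_ ?_ (by norm_num) (by norm_num) (by norm_num)⟩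
          · simp [bundle_succ, bundle_zero, e0, e1, e2, e3]
          · simp [bundle_succ, bundle_zero, e0, e1, e2, e3, bval, advStream, ones, fives, pick, ha, hb, hc, hd] <;>
              norm_num
          · norm_num [bval, advStream, ones, fives, pick, ha, hb, hc, hd]
          · norm_num [advStream, ones, fives, pick, ha, hb, hc, hd]
        · rw [hd] at e3
          refine ⟨4, by norm_num, by norm_num, 0, 1,
            key ε hε F (advStream F) 0 1 4 {3,2,0} ?_ 1 1 3 ?_ ?_ ?_ (by norm_num) (by norm_num) (by norm_num)⟩
          · simp [bundle_succ, bundle_zero, e0, e1, e2, e3]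
          · simp [bundle_succ, bundle_zero, e0, e1, e2, e3, bval, advStream, ones, fives, pick, ha, hb, hc, hd] <;>
              norm_num
          · norm_num [bval, advStream, ones, fives, pick, ha, hb, hc, hd]
          · norm_num [advStream, ones, fives, pick, ha, hb, hc, hd]
    · rw [hb] at e1
      refine ⟨2, by norm_num, by norm_num, 0, 1,
        key ε hε F (advStream F) 0 1 2 {1,0} ?_ 0 1 2 ?_ ?_ ?_ (by norm_num) (by norm_num) (by norm_num)⟩
      · simp [bundle_succ, bundle_zero, e0, e1]
      · simp [bundle_succ, bundle_zero, e0, e1, bval, advStream, ones, fives, pick, ha, hb] <;>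
          norm_num
      · norm_num [bval, advStream, ones, fives, pick, ha, hb]
      · norm_num [advStream, ones, fives, pick, ha, hb]

end
end

section
/- For every real ε > 0 there exists N ∈ ℕ such that for every integer n ≥ N, setting α := 2n² + 2n, every deterministic online allocation algorithm F for n agents admits a 2-value stream v with v t i ∈ {1, α} for all t, i, and a time step T ≥ 1, such that the allocation induced by F at the end of time step T is not (1/√(2α) + ε)-MMS; that is, some agent i has v_i(A_i^T) < (1/√(2α) + ε) · μ_i^n(T). -/
open Finset

noncomputable section

/-- The `n`-agent maximin share of the additive valuation `w` over the finite set `S` of goods. -/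
def mmsN (n : ℕ) (S : Finset ℕ) (w : ℕ → ℝ) : ℝ :=
  sSup { x : ℝ | ∃ P : ℕ → Fin n,
    x = ⨅ j : Fin n, ∑ t ∈ S.filter (fun t => P t = j), w t }

-- AUX
def Aa (n : ℕ) : ℕ := 2 * n ^ 2 + 2 * n

def vv (n : ℕ) : ℕ → Fin n → NNReal := fun t _ => if t < Aa n then 1 else ((Aa n : ℕ) : NNReal)

def ww (n : ℕ) : ℕ → ℝ := fun t => if t < Aa n then 1 else (Aa n : ℝ)

lemma ww_nonneg (n t : ℕ) : 0 ≤ ww n t := by unfold ww; split <;> positivity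

lemma vv_coe (n t : ℕ) (i : Fin n) : ((vv n t i : NNReal) : ℝ) = ww n t := by
  unfold vv ww; split <;> simp

lemma mms_lb (n k : ℕ) (hk1 : 1 ≤ k) (hkn : k ≤ n) :
    ((Aa n / k : ℕ) : ℝ) ≤ mmsN n (Finset.range (Aa n + (n - k))) (ww n) := by
  classical
  have hn : 0 < n := lt_of_lt_of_le hk1 hkn
  haveI : Nonempty (Fin n) := ⟨⟨0, hn⟩⟩
  set T := Aa n + (n - k) with hT
  set q := Aa n / k with hq
  set P : ℕ → Fin n := fun t =>
    if t < Aa n then ⟨min (t / q) (k - 1), by omega⟩ else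
      if h2 : k + (t - Aa n) < n then ⟨k + (t - Aa n), h2⟩ else ⟨0, hn⟩ with hP
  have key : ∀ j : Fin n, (q : ℝ) ≤ ∑ t ∈ (Finset.range T).filter (fun t => P t = j), ww n t := by
    intro j
    rcases lt_or_ge j.val k with hj | hj
    · rcases Nat.eq_zero_or_pos q with hq0 | hq0
      · rw [hq0]
        exact_mod_cast Finset.sum_nonneg fun t _ => ww_nonneg n t
      · have hkq : k * q ≤ Aa n := by rw [hq, mul_comm]; exact Nat.div_mul_le_self _ _
        have hsub : Finset.Ico (j.val * q) (j.val * q + q) ⊆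
            (Finset.range T).filter (fun t => P t = j) := by
          intro t ht
          simp only [Finset.mem_Ico] at ht
          have htA : t < Aa n := by
            have h1 : j.val * q + q ≤ k * q := by nlinarith [ht.1, ht.2]
            omega
          have hdiv : t / q = j.val := by
            refine Nat.div_eq_of_lt_le ht.1 ?_
            have : (j.val + 1) * q = j.val * q + q := by ring
            omega
          simp only [Finset.mem_filter, Finset.mem_range]
          refine ⟨by omega, ?_⟩
          rw [hP]
          simp only [htA, if_pos]
          ext
          simp [hdiv]
          omega
        have hone : ∀ t ∈ Finset.Ico (j.val * q) (j.val * q + q), ww n t = 1 := by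
          intro t ht
          simp only [Finset.mem_Ico] at ht
          have htA : t < Aa n := by
            have h1 : j.val * q + q ≤ k * q := by nlinarith [ht.1, ht.2]
            omega
          simp [ww, htA]
        calc (q : ℝ) = ∑ t ∈ Finset.Ico (j.val * q) (j.val * q + q), (1 : ℝ) := by
              rw [Finset.sum_const, Nat.card_Ico, Nat.add_sub_cancel_left]
              simp
          _ = ∑ t ∈ Finset.Ico (j.val * q) (j.val * q + q), ww n t :=
              (Finset.sum_congr rfl hone).symm
          _ ≤ _ := Finset.sum_le_sum_of_subset_of_nonneg hsub (fun t _ _ => ww_nonneg n t)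
    · set t0 := Aa n + (j.val - k) with ht0
      have hmem : t0 ∈ (Finset.range T).filter (fun t => P t = j) := by
        simp only [Finset.mem_filter, Finset.mem_range]
        constructor
        · have := j.isLt; omega
        · rw [hP]
          have h1 : ¬ t0 < Aa n := by omega
          have h2 : k + (t0 - Aa n) < n := by have := j.isLt; omega
          simp only [h1, if_neg, not_false_iff, h2, dif_pos]
          ext; simp; omega
      have hwt0 : (q : ℝ) ≤ ww n t0 := by
        have h1 : ¬ t0 < Aa n := by omega
        have : ww n t0 = (Aa n : ℝ) := by simp [ww, h1]
        rw [this]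
        exact_mod_cast Nat.cast_le.mpr (Nat.div_le_self _ _)
      exact le_trans hwt0 (Finset.single_le_sum (fun t _ => ww_nonneg n t) hmem)
  have hbdd : BddAbove { x : ℝ | ∃ P' : ℕ → Fin n,
      x = ⨅ j : Fin n, ∑ t ∈ (Finset.range T).filter (fun t => P' t = j), ww n t } := by
    refine ⟨∑ t ∈ Finset.range T, ww n t, ?_⟩
    rintro x ⟨P', rfl⟩
    refine le_trans (ciInf_le ((Set.finite_range _).bddBelow) ⟨0, hn⟩) ?_
    exact Finset.sum_le_sum_of_subset_of_nonneg (Finset.filter_subset _ _) (fun t _ _ => ww_nonneg n t)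
  have hmem : (⨅ j : Fin n, ∑ t ∈ (Finset.range T).filter (fun t => P t = j), ww n t) ∈
      { x : ℝ | ∃ P' : ℕ → Fin n,
        x = ⨅ j : Fin n, ∑ t ∈ (Finset.range T).filter (fun t => P' t = j), ww n t } := ⟨P, rfl⟩
  exact le_trans (le_ciInf key) (le_csSup hbdd hmem)

def cnt (n : ℕ) (F : List (Fin n → NNReal) → Fin n) (i : Fin n) : ℕ :=
  ((Finset.range (Aa n)).filter (fun t => alloc n F (vv n) t = i)).card

def advS (n : ℕ) (F : List (Fin n → NNReal) → Fin n) (k : ℕ) : Finset (Fin n) :=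
  Finset.univ.filter (fun i => ∀ t ∈ Finset.Ico (Aa n) (Aa n + (n - k)), alloc n F (vv n) t ≠ i)

lemma sum_cnt (n : ℕ) (F : List (Fin n → NNReal) → Fin n) :
    ∑ i : Fin n, cnt n F i = Aa n := by
  have h := Finset.card_eq_sum_card_fiberwise
    (f := fun t => alloc n F (vv n) t) (s := Finset.range (Aa n)) (t := Finset.univ)
    (fun t _ => Finset.mem_univ _)
  rw [Finset.card_range] at h
  exact h.symm

lemma advS_card (n : ℕ) (F : List (Fin n → NNReal) → Fin n) (k : ℕ) (hk : k ≤ n) :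
    k ≤ (advS n F k).card := by
  classical
  have hsub : Finset.univ \ advS n F k ⊆
      (Finset.Ico (Aa n) (Aa n + (n - k))).image (alloc n F (vv n)) := by
    intro i hi
    simp only [advS, Finset.mem_sdiff, Finset.mem_filter, Finset.mem_univ, true_and,
      not_forall] at hi
    obtain ⟨t, ht, hti⟩ := hi
    push_neg at hti
    exact Finset.mem_image.mpr ⟨t, ht, hti⟩
  have h1 : (Finset.univ \ advS n F k).card ≤ n - k := by
    refine le_trans (Finset.card_le_card hsub) ?_
    refine le_trans (Finset.card_image_le) ?_
    rw [Nat.card_Ico]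
    omega
  have h2 : (Finset.univ \ advS n F k).card = n - (advS n F k).card := by
    rw [Finset.card_sdiff_of_subset (Finset.subset_univ _), Finset.card_univ, Fintype.card_fin]
  have h3 : (advS n F k).card ≤ n := le_trans (Finset.card_le_card (Finset.subset_univ _))
    (by rw [Finset.card_univ, Fintype.card_fin])
  omega

lemma advS_mono (n : ℕ) (F : List (Fin n → NNReal) → Fin n) {k l : ℕ} (h : k ≤ l) :
    advS n F k ⊆ advS n F l := by
  intro i hi
  simp only [advS, Finset.mem_filter, Finset.mem_univ, true_and] at hi ⊢
  intro t ht
  refine hi t ?_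
  simp only [Finset.mem_Ico] at ht ⊢
  omega

lemma bval_eq_cnt (n : ℕ) (F : List (Fin n → NNReal) → Fin n) (k : ℕ) (i : Fin n)
    (hi : i ∈ advS n F k) :
    bval n (vv n) i (bundle n F (vv n) i (Aa n + (n - k))) = (cnt n F i : ℝ) := by
  classical
  simp only [advS, Finset.mem_filter, Finset.mem_univ, true_and] at hi
  unfold bval bundle
  rw [Finset.range_eq_Ico,
    ← Finset.Ico_union_Ico_eq_Ico (Nat.zero_le (Aa n)) (Nat.le_add_right _ _),
    Finset.filter_union, Finset.sum_union]
  · have h2 : (Finset.Ico (Aa n) (Aa n + (n - k))).filter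
        (fun t => alloc n F (vv n) t = i) = ∅ := by
      refine Finset.filter_false_of_mem ?_
      intro t ht
      exact hi t ht
    rw [h2, Finset.sum_empty, add_zero]
    have h3 : ∀ t ∈ (Finset.Ico 0 (Aa n)).filter (fun t => alloc n F (vv n) t = i),
        ((vv n t i : NNReal) : ℝ) = 1 := by
      intro t ht
      simp only [Finset.mem_filter, Finset.mem_Ico] at ht
      simp [vv, ht.1.2]
    rw [Finset.sum_congr rfl h3, Finset.sum_const, nsmul_eq_mul, mul_one, cnt,
      Finset.range_eq_Ico]
  · exact Finset.disjoint_filter_filter (Finset.Ico_disjoint_Ico_consecutive _ _ _)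


/-- For every `ε > 0` there is `N` such that for every `n ≥ N`, with `α := 2n² + 2n`, every
deterministic online allocation algorithm for `n` agents admits a `2`-value stream with values
in `{1, α}` and a time step `T ≥ 1` at the end of which the allocation is not
`(1/√(2α) + ε)`-MMS. -/
theorem statement2 (ε : ℝ) (hε : 0 < ε) :
    ∃ N : ℕ, ∀ n : ℕ, N ≤ n →
      ∀ F : List (Fin n → NNReal) → Fin n,
        ∃ v : ℕ → Fin n → NNReal,
          (∀ (t : ℕ) (i : Fin n), v t i = 1 ∨ v t i = ((2 * n ^ 2 + 2 * n : ℕ) : NNReal)) ∧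
          ∃ T : ℕ, 1 ≤ T ∧
            ∃ i : Fin n,
              bval n v i (bundle n F v i T) <
                (1 / Real.sqrt (2 * ((2 * n ^ 2 + 2 * n : ℕ) : ℝ)) + ε) *
                  mmsN n (Finset.range T) (fun t => (v t i : ℝ)) := by
  classical
  obtain ⟨K, hK1, hHK⟩ : ∃ K : ℕ, 1 ≤ K ∧ 2 / ε ≤ ∑ i ∈ Finset.range K, (1 : ℝ) / (i + 1) := by
    obtain ⟨K, h1, h2⟩ := ((Filter.eventually_ge_atTop 1).and
      (Real.tendsto_sum_range_one_div_nat_succ_atTop.eventually_ge_atTop (2 / ε))).exists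
    exact ⟨K, h1, h2⟩
  refine ⟨max (K + 1) (⌈ε * K⌉₊ + 1), fun n hn F => ?_⟩
  have hnK : K + 1 ≤ n := le_trans (le_max_left _ _) hn
  have hn1 : 1 ≤ n := by omega
  have hεK : ε * K < n := by
    have h1 : (⌈ε * K⌉₊ + 1 : ℕ) ≤ n := le_trans (le_max_right _ _) hn
    have h2 := Nat.le_ceil (ε * K)
    have h3 : ((⌈ε * K⌉₊ : ℝ) + 1) ≤ n := by exact_mod_cast h1
    linarith
  have hnA : n ≤ Aa n := by unfold Aa; nlinarith
  refine ⟨vv n, fun t i => ?_, ?_⟩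
  · unfold vv Aa
    split
    · exact Or.inl rfl
    · exact Or.inr rfl
  by_contra hcon
  push_neg at hcon
  set c : ℝ := 1 / Real.sqrt (2 * ((2 * n ^ 2 + 2 * n : ℕ) : ℝ)) + ε with hc
  have hcε : ε ≤ c := le_add_of_nonneg_left (by positivity)
  have hc0 : 0 ≤ c := le_trans hε.le hcε
  have hkey : ∀ k, 1 ≤ k → k ≤ n → ∀ i ∈ advS n F k,
      c * ((Aa n / k : ℕ) : ℝ) ≤ (cnt n F i : ℝ) := by
    intro k hk1 hkn i hi
    have h1 := hcon (Aa n + (n - k)) (by have : 1 ≤ Aa n := le_trans hn1 hnA; omega) i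
    have h3 : (fun t => ((vv n t i : NNReal) : ℝ)) = ww n := funext (fun t => vv_coe n t i)
    rw [h3] at h1
    have h4 := bval_eq_cnt n F k i hi
    rw [h4] at h1
    exact le_trans (mul_le_mul_of_nonneg_left (mms_lb n k hk1 hkn) hc0) h1
  have hind : ∀ k, k ≤ K → ∃ B : Finset (Fin n), B ⊆ advS n F k ∧ B.card = k ∧
      c * ∑ i ∈ Finset.range k, ((Aa n / (i + 1) : ℕ) : ℝ) ≤ ∑ i ∈ B, (cnt n F i : ℝ) := by
    intro k
    induction k with
    | zero => exact fun _ => ⟨∅, Finset.empty_subset _, rfl, by simp⟩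
    | succ k ih =>
      intro hkK
      obtain ⟨B, hBS, hBcard, hBsum⟩ := ih (le_trans (Nat.le_succ k) hkK)
      have hcard : k + 1 ≤ (advS n F (k + 1)).card := advS_card n F (k + 1) (by omega)
      have hex : ∃ i ∈ advS n F (k + 1), i ∉ B := by
        by_contra h
        push_neg at h
        have hsub : advS n F (k + 1) ⊆ B := h
        have := Finset.card_le_card hsub
        omega
      obtain ⟨i, hiS, hiB⟩ := hex
      refine ⟨insert i B, ?_, ?_, ?_⟩
      · exact Finset.insert_subset hiS (le_trans hBS (advS_mono n F (Nat.le_succ k)))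
      · rw [Finset.card_insert_of_notMem hiB, hBcard]
      · rw [Finset.sum_insert hiB, Finset.sum_range_succ, mul_add]
        have h5 := hkey (k + 1) (by omega) (by omega) i hiS
        linarith
  obtain ⟨B, hBS, hBcard, hBsum⟩ := hind K le_rfl
  have hsumall : ∑ i ∈ B, (cnt n F i : ℝ) ≤ (Aa n : ℝ) := by
    have h1 : ∑ i ∈ B, cnt n F i ≤ ∑ i : Fin n, cnt n F i :=
      Finset.sum_le_sum_of_subset (Finset.subset_univ _)
    rw [sum_cnt n F] at h1
    exact_mod_cast h1
  have hq : ∀ i ∈ Finset.range K, (Aa n : ℝ) / (i + 1) - 1 ≤ ((Aa n / (i + 1) : ℕ) : ℝ) := by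
    intro i _
    have h1 := Nat.div_add_mod (Aa n) (i + 1)
    have h2 : Aa n % (i + 1) < i + 1 := Nat.mod_lt _ (by omega)
    have h3 : (Aa n : ℝ) < ((i : ℝ) + 1) * ((Aa n / (i + 1) : ℕ) : ℝ) + ((i : ℝ) + 1) := by
      have : Aa n < (i + 1) * (Aa n / (i + 1)) + (i + 1) := by omega
      exact_mod_cast this
    have hip : (0 : ℝ) < (i : ℝ) + 1 := by positivity
    rw [div_sub_one (ne_of_gt hip), div_le_iff₀ hip]
    nlinarith
  set H : ℝ := ∑ i ∈ Finset.range K, (1 : ℝ) / (i + 1) with hH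
  have hsum_lb : (Aa n : ℝ) * H - K ≤ ∑ i ∈ Finset.range K, ((Aa n / (i + 1) : ℕ) : ℝ) := by
    have h1 : (Aa n : ℝ) * H - K = ∑ i ∈ Finset.range K, ((Aa n : ℝ) / (i + 1) - 1) := by
      rw [Finset.sum_sub_distrib, Finset.sum_const, Finset.card_range, hH, Finset.mul_sum]
      congr 1
      · exact Finset.sum_congr rfl (fun i _ => by ring)
      · simp
    rw [h1]
    exact Finset.sum_le_sum hq
  have hQ0 : 0 ≤ ∑ i ∈ Finset.range K, ((Aa n / (i + 1) : ℕ) : ℝ) :=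
    Finset.sum_nonneg (fun i _ => by positivity)
  have hchain : c * ((Aa n : ℝ) * H - K) ≤ (Aa n : ℝ) := by
    calc c * ((Aa n : ℝ) * H - K) ≤ c * ∑ i ∈ Finset.range K, ((Aa n / (i + 1) : ℕ) : ℝ) :=
          mul_le_mul_of_nonneg_left hsum_lb hc0
      _ ≤ ∑ i ∈ B, (cnt n F i : ℝ) := hBsum
      _ ≤ (Aa n : ℝ) := hsumall
  have hH1 : (1 : ℝ) ≤ H := by
    rw [hH]
    calc (1 : ℝ) = ∑ i ∈ Finset.range 1, (1 : ℝ) / (i + 1) := by norm_num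
      _ ≤ _ := Finset.sum_le_sum_of_subset_of_nonneg
          (Finset.range_subset_range.mpr hK1) (fun i _ _ => by positivity)
  have hKA : (K : ℝ) ≤ (Aa n : ℝ) := by
    have : K ≤ Aa n := by omega
    exact_mod_cast this
  have hαH : 0 ≤ (Aa n : ℝ) * H - K := by nlinarith
  have hfin : ε * ((Aa n : ℝ) * H - K) ≤ (Aa n : ℝ) :=
    le_trans (mul_le_mul_of_nonneg_right hcε hαH) hchain
  have hεH : 2 ≤ ε * H := by
    rw [div_le_iff₀ hε] at hHK
    linarith
  have hnAr : (n : ℝ) ≤ (Aa n : ℝ) := by exact_mod_cast hnA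
  have hA0 : (0 : ℝ) ≤ (Aa n : ℝ) := by positivity
  nlinarith

end
end

section
/- For every integer n ≥ 1 and all α, β : Fin n → ℝ≥0 with β i ≤ α i for every i, there exists a deterministic online allocation algorithm F such that for every personalized 2-value stream v with parameters α, β, every agent i with α i > β i > 0 (a 'type 1' agent), and every time step T: v_i(A_i^T) ≥ μ_i^n(T)/(2n−1); moreover, if n_h(i,T) ≥ n, then v_i(A_i^T) ≥ μ_i^n(T)/4. -/
open Finset
open scoped Classical

noncomputable section

namespace Stmt5

variable {n : ℕ}

/-- The set of type-1 agents. -/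
def Dset (n : ℕ) (α β : Fin n → NNReal) : Finset (Fin n) :=
  Finset.univ.filter fun j => 0 < β j ∧ β j < α j

/-- minimum of `c` over a finset (0 if empty). -/
def cmin (D : Finset (Fin n)) (c : Fin n → ℕ) : ℕ :=
  if h : D.Nonempty then D.inf' h c else 0

lemma cmin_le {D : Finset (Fin n)} {c : Fin n → ℕ} {j : Fin n} (hj : j ∈ D) :
    cmin D c ≤ c j := by
  rw [cmin, dif_pos ⟨j, hj⟩]
  exact Finset.inf'_le c hj

lemma exists_cmin {D : Finset (Fin n)} (hD : D.Nonempty) (c : Fin n → ℕ) :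
    ∃ j ∈ D, cmin D c = c j := by
  rw [cmin, dif_pos hD]
  exact Finset.exists_mem_eq_inf' hD c

/-- The greedy choice given counters `ch = (c, h)` and today's value vector. -/
def pick (hn : 0 < n) (α β : Fin n → NNReal) (ch : (Fin n → ℕ) × (Fin n → ℕ))
    (val : Fin n → NNReal) : Fin n :=
  if hS : ((Dset n α β).filter fun j =>
      val j = α j ∧ ch.2 j < cmin (Dset n α β) ch.1).Nonempty then
    (((Dset n α β).filter fun j => val j = α j ∧ ch.2 j < cmin (Dset n α β) ch.1).filter
        fun j => ch.2 j = cmin ((Dset n α β).filter fun j =>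
          val j = α j ∧ ch.2 j < cmin (Dset n α β) ch.1) ch.2).min'
      (by
        obtain ⟨m, hm, hmeq⟩ := exists_cmin hS ch.2
        exact ⟨m, Finset.mem_filter.mpr ⟨hm, hmeq.symm⟩⟩)
  else if hC : (((Dset n α β).filter fun j => ch.1 j = cmin (Dset n α β) ch.1).filter
      fun j => val j = α j).Nonempty then
    (((Dset n α β).filter fun j => ch.1 j = cmin (Dset n α β) ch.1).filter
      fun j => val j = α j).min' hC
  else if hM : ((Dset n α β).filter fun j => ch.1 j = cmin (Dset n α β) ch.1).Nonempty then
    ((Dset n α β).filter fun j => ch.1 j = cmin (Dset n α β) ch.1).min' hM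
  else ⟨0, hn⟩

/-- The state (count of received goods, count of received high goods) after `t` steps. -/
def st (hn : 0 < n) (α β : Fin n → NNReal) (v : ℕ → Fin n → NNReal) :
    ℕ → (Fin n → ℕ) × (Fin n → ℕ)
  | 0 => (fun _ => 0, fun _ => 0)
  | t + 1 =>
    (fun j => if j = pick hn α β (st hn α β v t) (v t) then (st hn α β v t).1 j + 1
              else (st hn α β v t).1 j,
     fun j => if j = pick hn α β (st hn α β v t) (v t) ∧ v t j = α j then (st hn α β v t).2 j + 1
              else (st hn α β v t).2 j)

/-- The recipient of good `t`. -/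
def sig (hn : 0 < n) (α β : Fin n → NNReal) (v : ℕ → Fin n → NNReal) (t : ℕ) : Fin n :=
  pick hn α β (st hn α β v t) (v t)

/-- The online algorithm as a function of the history list. -/
def Falg (hn : 0 < n) (α β : Fin n → NNReal) (l : List (Fin n → NNReal)) : Fin n :=
  sig hn α β (fun s => l.getD s (fun _ => 0)) (l.length - 1)

section Basic

variable (hn : 0 < n) (α β : Fin n → NNReal) (v : ℕ → Fin n → NNReal)

/-- the set of hungry claimants at time t -/
def SS (t : ℕ) : Finset (Fin n) :=
  (Dset n α β).filter fun j =>
    v t j = α j ∧ (st hn α β v t).2 j < cmin (Dset n α β) (st hn α β v t).1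

/-- minimum-count agents at time t -/
def MM (t : ℕ) : Finset (Fin n) :=
  (Dset n α β).filter fun j => (st hn α β v t).1 j = cmin (Dset n α β) (st hn α β v t).1

/-- minimum-count claimants at time t -/
def CCs (t : ℕ) : Finset (Fin n) :=
  (MM hn α β v t).filter fun j => v t j = α j

lemma sig_spec1 {t : ℕ} (hS : (SS hn α β v t).Nonempty) :
    sig hn α β v t ∈ SS hn α β v t ∧
    (∀ u ∈ SS hn α β v t, (st hn α β v t).2 (sig hn α β v t) ≤ (st hn α β v t).2 u) ∧
    (∀ u ∈ SS hn α β v t,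
      (st hn α β v t).2 u = (st hn α β v t).2 (sig hn α β v t) → sig hn α β v t ≤ u) := by
  have hS' := hS
  rw [SS] at hS'
  rw [sig, pick, dif_pos hS']
  set S := (Dset n α β).filter fun j =>
    v t j = α j ∧ (st hn α β v t).2 j < cmin (Dset n α β) (st hn α β v t).1 with hSdef
  have hne : (S.filter fun j => (st hn α β v t).2 j = cmin S (st hn α β v t).2).Nonempty := by
    obtain ⟨m, hm, hmeq⟩ := exists_cmin hS' (st hn α β v t).2
    exact ⟨m, Finset.mem_filter.mpr ⟨hm, hmeq.symm⟩⟩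
  have hmem := Finset.min'_mem _ hne
  rw [Finset.mem_filter] at hmem
  refine ⟨?_, ?_, ?_⟩
  · rw [SS]; exact hmem.1
  · intro u hu
    rw [SS] at hu
    rw [hmem.2]
    exact cmin_le hu
  · intro u hu heq
    rw [SS] at hu
    apply Finset.min'_le
    rw [Finset.mem_filter]
    exact ⟨hu, by rw [heq, hmem.2]⟩

lemma sig_spec2 {t : ℕ} (hS : ¬ (SS hn α β v t).Nonempty) (hC : (CCs hn α β v t).Nonempty) :
    sig hn α β v t ∈ CCs hn α β v t := by
  have hS' : ¬ ((Dset n α β).filter fun j =>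
      v t j = α j ∧ (st hn α β v t).2 j < cmin (Dset n α β) (st hn α β v t).1).Nonempty := by
    rw [SS] at hS; exact hS
  have hC' : (((Dset n α β).filter fun j =>
      (st hn α β v t).1 j = cmin (Dset n α β) (st hn α β v t).1).filter
      fun j => v t j = α j).Nonempty := by
    rw [CCs, MM] at hC; exact hC
  rw [sig, pick, dif_neg hS', dif_pos hC']
  have := Finset.min'_mem _ hC'
  rw [CCs, MM]
  exact this

lemma sig_spec3 {t : ℕ} (hS : ¬ (SS hn α β v t).Nonempty) (hC : ¬ (CCs hn α β v t).Nonempty)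
    (hM : (MM hn α β v t).Nonempty) :
    sig hn α β v t ∈ MM hn α β v t ∧ ∀ u ∈ MM hn α β v t, sig hn α β v t ≤ u := by
  have hS' : ¬ ((Dset n α β).filter fun j =>
      v t j = α j ∧ (st hn α β v t).2 j < cmin (Dset n α β) (st hn α β v t).1).Nonempty := by
    rw [SS] at hS; exact hS
  have hC' : ¬ (((Dset n α β).filter fun j =>
      (st hn α β v t).1 j = cmin (Dset n α β) (st hn α β v t).1).filter
      fun j => v t j = α j).Nonempty := by
    rw [CCs, MM] at hC; exact hC
  have hM' : ((Dset n α β).filter fun j =>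
      (st hn α β v t).1 j = cmin (Dset n α β) (st hn α β v t).1).Nonempty := by
    rw [MM] at hM; exact hM
  rw [sig, pick, dif_neg hS', dif_neg hC', dif_pos hM']
  constructor
  · have := Finset.min'_mem _ hM'
    rw [MM]; exact this
  · intro u hu
    apply Finset.min'_le
    rw [MM] at hu; exact hu

lemma MM_nonempty (hD : (Dset n α β).Nonempty) (t : ℕ) : (MM hn α β v t).Nonempty := by
  obtain ⟨j, hj, hjeq⟩ := exists_cmin hD (st hn α β v t).1
  exact ⟨j, by rw [MM, Finset.mem_filter]; exact ⟨hj, hjeq.symm⟩⟩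

lemma CCs_subset_MM (t : ℕ) : CCs hn α β v t ⊆ MM hn α β v t := Finset.filter_subset _ _

lemma sig_mem_MM {t : ℕ} (hD : (Dset n α β).Nonempty) (hS : ¬ (SS hn α β v t).Nonempty) :
    sig hn α β v t ∈ MM hn α β v t := by
  by_cases hC : (CCs hn α β v t).Nonempty
  · exact CCs_subset_MM hn α β v t (sig_spec2 hn α β v hS hC)
  · exact (sig_spec3 hn α β v hS hC (MM_nonempty hn α β v hD t)).1

lemma SS_subset_D (t : ℕ) : SS hn α β v t ⊆ Dset n α β := Finset.filter_subset _ _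
lemma MM_subset_D (t : ℕ) : MM hn α β v t ⊆ Dset n α β := Finset.filter_subset _ _

lemma sig_mem_D {t : ℕ} (hD : (Dset n α β).Nonempty) : sig hn α β v t ∈ Dset n α β := by
  by_cases hS : (SS hn α β v t).Nonempty
  · exact SS_subset_D hn α β v t (sig_spec1 hn α β v hS).1
  · exact MM_subset_D hn α β v t (sig_mem_MM hn α β v hD hS)

lemma st_succ_fst (t : ℕ) (j : Fin n) :
    (st hn α β v (t + 1)).1 j =
      if j = sig hn α β v t then (st hn α β v t).1 j + 1 else (st hn α β v t).1 j := rfl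

lemma st_succ_snd (t : ℕ) (j : Fin n) :
    (st hn α β v (t + 1)).2 j =
      if j = sig hn α β v t ∧ v t j = α j then (st hn α β v t).2 j + 1
      else (st hn α β v t).2 j := rfl

lemma cc_eq_card (T : ℕ) (j : Fin n) :
    (st hn α β v T).1 j = ((range T).filter fun t => sig hn α β v t = j).card := by
  induction T with
  | zero => simp [st]
  | succ T ih =>
    rw [Finset.range_add_one, Finset.filter_insert]
    by_cases hj : sig hn α β v T = j
    · rw [if_pos hj, Finset.card_insert_of_notMem (by simp), st_succ_fst, if_pos hj.symm, ih]
    · rw [if_neg hj, st_succ_fst, if_neg (fun hcon => hj hcon.symm), ih]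

lemma hh_eq_card (T : ℕ) (j : Fin n) :
    (st hn α β v T).2 j =
      ((range T).filter fun t => sig hn α β v t = j ∧ v t j = α j).card := by
  induction T with
  | zero => simp [st]
  | succ T ih =>
    rw [Finset.range_add_one, Finset.filter_insert]
    by_cases hj : sig hn α β v T = j ∧ v T j = α j
    · rw [if_pos hj, Finset.card_insert_of_notMem (by simp), st_succ_snd,
        if_pos ⟨hj.1.symm, hj.2⟩, ih]
    · rw [if_neg hj, st_succ_snd, if_neg (fun hcon => hj ⟨hcon.1.symm, hcon.2⟩), ih]

lemma cc_mono {t t' : ℕ} (h : t ≤ t') (j : Fin n) :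
    (st hn α β v t).1 j ≤ (st hn α β v t').1 j := by
  rw [cc_eq_card, cc_eq_card]
  exact Finset.card_le_card (Finset.filter_subset_filter _ (Finset.range_subset_range.mpr h))

lemma hh_mono {t t' : ℕ} (h : t ≤ t') (j : Fin n) :
    (st hn α β v t).2 j ≤ (st hn α β v t').2 j := by
  rw [hh_eq_card, hh_eq_card]
  exact Finset.card_le_card (Finset.filter_subset_filter _ (Finset.range_subset_range.mpr h))

lemma hh_le_cc (t : ℕ) (j : Fin n) : (st hn α β v t).2 j ≤ (st hn α β v t).1 j := by
  rw [cc_eq_card, hh_eq_card]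
  exact Finset.card_le_card (by
    intro x hx
    rw [Finset.mem_filter] at hx ⊢
    exact ⟨hx.1, hx.2.1⟩)

lemma cc_pos (t : ℕ) (j : Fin n) (h : 0 < (st hn α β v t).1 j) :
    ∃ s < t, sig hn α β v s = j := by
  rw [cc_eq_card] at h
  obtain ⟨s, hs⟩ := Finset.card_pos.mp h
  rw [Finset.mem_filter, Finset.mem_range] at hs
  exact ⟨s, hs.1, hs.2⟩

end Basic

end Stmt5

namespace Stmt5
section Bridge

variable (hn : 0 < n) (α β : Fin n → NNReal)

lemma st_congr {v w : ℕ → Fin n → NNReal} {t : ℕ}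
    (hvw : ∀ s < t, v s = w s) : st hn α β v t = st hn α β w t := by
  induction t with
  | zero => rfl
  | succ t ih =>
    have h1 : st hn α β v t = st hn α β w t :=
      ih fun s hs => hvw s (hs.trans (Nat.lt_succ_self t))
    have h2 : v t = w t := hvw t (Nat.lt_succ_self t)
    show (fun j => if j = pick hn α β (st hn α β v t) (v t) then (st hn α β v t).1 j + 1
              else (st hn α β v t).1 j,
          fun j => if j = pick hn α β (st hn α β v t) (v t) ∧ v t j = α j
              then (st hn α β v t).2 j + 1 else (st hn α β v t).2 j) = _
    rw [h1, h2]
    rfl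

lemma sig_congr {v w : ℕ → Fin n → NNReal} {t : ℕ}
    (hvw : ∀ s ≤ t, v s = w s) : sig hn α β v t = sig hn α β w t := by
  rw [sig, sig, st_congr hn α β (fun s hs => hvw s hs.le), hvw t le_rfl]

lemma alloc_Falg (v : ℕ → Fin n → NNReal) (t : ℕ) :
    alloc n (Falg hn α β) v t = sig hn α β v t := by
  rw [alloc, Falg]
  have hlen : ((List.range (t + 1)).map v).length = t + 1 := by simp
  rw [hlen, Nat.add_sub_cancel]
  apply sig_congr
  intro s hs
  have : ((List.range (t + 1)).map v).getD s (fun _ => 0) = v s := by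
    rw [List.getD_eq_getElem?_getD]
    rw [List.getElem?_map]
    rw [List.getElem?_range (by omega : s < t + 1)]
    rfl
  rw [this]

lemma bundle_eq (v : ℕ → Fin n → NNReal) (i : Fin n) (T : ℕ) :
    bundle n (Falg hn α β) v i T = (range T).filter fun t => sig hn α β v t = i := by
  rw [bundle]
  apply Finset.filter_congr
  intro t _
  rw [alloc_Falg]

end Bridge
end Stmt5

namespace Stmt5
section Counting

variable (hn : 0 < n) (α β : Fin n → NNReal) (v : ℕ → Fin n → NNReal)

lemma card_le_of_mono_inj {A : Finset ℕ} {f : ℕ → ℕ} {m : ℕ}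
    (hlt : ∀ t ∈ A, f t < m)
    (hinc : ∀ t ∈ A, ∀ t' ∈ A, t < t' → f t < f t') :
    A.card ≤ m := by
  have hinj : Set.InjOn f A := by
    intro a ha b hb hab
    rcases lt_trichotomy a b with h | h | h
    · exact absurd hab (ne_of_lt (hinc a ha b hb h))
    · exact h
    · exact absurd hab.symm (ne_of_lt (hinc b hb a ha h))
  calc A.card = (A.image f).card := (Finset.card_image_of_injOn hinj).symm
    _ ≤ (range m).card := Finset.card_le_card (by
        intro x hx
        obtain ⟨t, ht, rfl⟩ := Finset.mem_image.mp hx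
        exact Finset.mem_range.mpr (hlt t ht))
    _ = m := Finset.card_range m

lemma card_le_of_pair_inj {A : Finset ℕ} {g : ℕ → Fin n} {f : ℕ → ℕ} {i : Fin n} {m : ℕ}
    (hgi : ∀ t ∈ A, g t ≠ i) (hlt : ∀ t ∈ A, f t < m)
    (hinc : ∀ t ∈ A, ∀ t' ∈ A, t < t' → g t = g t' → f t < f t') :
    A.card ≤ (n - 1) * m := by
  have hinj : Set.InjOn (fun t => (g t, f t)) A := by
    intro a ha b hb hab
    simp only [Prod.mk.injEq] at hab
    rcases lt_trichotomy a b with h | h | h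
    · exact absurd hab.2 (ne_of_lt (hinc a ha b hb h hab.1))
    · exact h
    · exact absurd hab.2.symm (ne_of_lt (hinc b hb a ha h hab.1.symm))
  calc A.card = (A.image fun t => (g t, f t)).card := (Finset.card_image_of_injOn hinj).symm
    _ ≤ ((Finset.univ.erase i) ×ˢ range m).card := Finset.card_le_card (by
        intro x hx
        obtain ⟨t, ht, rfl⟩ := Finset.mem_image.mp hx
        rw [Finset.mem_product]
        exact ⟨Finset.mem_erase.mpr ⟨hgi t ht, Finset.mem_univ _⟩,
          Finset.mem_range.mpr (hlt t ht)⟩)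
    _ = (n - 1) * m := by
        rw [Finset.card_product, Finset.card_erase_of_mem (Finset.mem_univ i),
          Finset.card_range, Finset.card_univ, Fintype.card_fin]

lemma sum_cc (hD : (Dset n α β).Nonempty) (T : ℕ) :
    ∑ j ∈ Dset n α β, (st hn α β v T).1 j = T := by
  induction T with
  | zero => simp [st]
  | succ T ih =>
    have hmem : sig hn α β v T ∈ Dset n α β := sig_mem_D hn α β v hD
    calc ∑ j ∈ Dset n α β, (st hn α β v (T + 1)).1 j
        = ∑ j ∈ Dset n α β,
            ((st hn α β v T).1 j + if j = sig hn α β v T then 1 else 0) := by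
          apply Finset.sum_congr rfl
          intro j _
          rw [st_succ_fst]
          split_ifs <;> omega
      _ = T + 1 := by
          rw [Finset.sum_add_distrib, ih, Finset.sum_ite_eq' (Dset n α β) (sig hn α β v T)
            (fun _ => 1), if_pos hmem]

/-- Per-agent count bound: every other agent holds at most `2 c_i + 1` goods. -/
lemma cc_le_other (hD : (Dset n α β).Nonempty) {i j : Fin n} (hi : i ∈ Dset n α β)
    (T : ℕ) :
    (st hn α β v T).1 j ≤ 2 * (st hn α β v T).1 i + 1 := by
  set ci := (st hn α β v T).1 i with hci
  rw [cc_eq_card]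
  have hsplit := Finset.card_filter_add_card_filter_not
    (s := (range T).filter fun t => sig hn α β v t = j)
    (fun t => (SS hn α β v t).Nonempty)
  rw [← hsplit]
  have hA : (((range T).filter fun t => sig hn α β v t = j).filter
      fun t => (SS hn α β v t).Nonempty).card ≤ ci := by
    apply card_le_of_mono_inj (f := fun t => (st hn α β v t).2 j)
    · intro t ht
      simp only [Finset.mem_filter, Finset.mem_range] at ht
      obtain ⟨⟨htT, hsig⟩, hS⟩ := ht
      have hmem := (sig_spec1 hn α β v hS).1
      rw [hsig] at hmem
      rw [SS, Finset.mem_filter] at hmem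
      calc (st hn α β v t).2 j < cmin (Dset n α β) (st hn α β v t).1 := hmem.2.2
        _ ≤ (st hn α β v t).1 i := cmin_le hi
        _ ≤ ci := by rw [hci]; exact cc_mono hn α β v htT.le i
    · intro t ht t' ht' htt'
      simp only [Finset.mem_filter, Finset.mem_range] at ht ht'
      obtain ⟨⟨htT, hsig⟩, hS⟩ := ht
      have hmem := (sig_spec1 hn α β v hS).1
      rw [hsig] at hmem
      rw [SS, Finset.mem_filter] at hmem
      have hstep : (st hn α β v t).2 j < (st hn α β v (t + 1)).2 j := by
        rw [st_succ_snd, if_pos ⟨hsig.symm, hmem.2.1⟩]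
        omega
      exact hstep.trans_le (hh_mono hn α β v htt' j)
  have hB : (((range T).filter fun t => sig hn α β v t = j).filter
      fun t => ¬ (SS hn α β v t).Nonempty).card ≤ ci + 1 := by
    apply card_le_of_mono_inj (f := fun t => (st hn α β v t).1 j)
    · intro t ht
      simp only [Finset.mem_filter, Finset.mem_range] at ht
      obtain ⟨⟨htT, hsig⟩, hS⟩ := ht
      have hmem := sig_mem_MM hn α β v hD hS
      rw [hsig] at hmem
      rw [MM, Finset.mem_filter] at hmem
      have : (st hn α β v t).1 j ≤ (st hn α β v t).1 i := by
        rw [hmem.2]; exact cmin_le hi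
      have : (st hn α β v t).1 j ≤ ci := this.trans (by rw [hci]; exact cc_mono hn α β v htT.le i)
      omega
    · intro t ht t' ht' htt'
      simp only [Finset.mem_filter, Finset.mem_range] at ht ht'
      obtain ⟨⟨htT, hsig⟩, hS⟩ := ht
      have hstep : (st hn α β v t).1 j < (st hn α β v (t + 1)).1 j := by
        rw [st_succ_fst, if_pos hsig.symm]
        omega
      exact hstep.trans_le (cc_mono hn α β v htt' j)
  omega

/-- The razor lemma: every agent `i ∈ D` receives a fair count. -/
lemma razor (hD : (Dset n α β).Nonempty) {i : Fin n} (hi : i ∈ Dset n α β) (T : ℕ) :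
    T ≤ (2 * n - 1) * (st hn α β v T).1 i + (n - 1) := by
  set ci := (st hn α β v T).1 i with hci
  have hsum := sum_cc hn α β v hD T
  have hsplit : ∑ j ∈ Dset n α β, (st hn α β v T).1 j
      = ci + ∑ j ∈ (Dset n α β).erase i, (st hn α β v T).1 j := by
    rw [hci, Finset.add_sum_erase _ _ hi]
  have hbnd : ∑ j ∈ (Dset n α β).erase i, (st hn α β v T).1 j
      ≤ ((Dset n α β).erase i).card * (2 * ci + 1) := by
    rw [← smul_eq_mul]
    apply Finset.sum_le_card_nsmul
    intro j _
    exact cc_le_other hn α β v hD hi T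
  have hcard : ((Dset n α β).erase i).card ≤ n - 1 := by
    have h1 : (Dset n α β).card ≤ n := by
      calc (Dset n α β).card ≤ (Finset.univ : Finset (Fin n)).card :=
            Finset.card_le_card (Finset.subset_univ _)
        _ = n := by rw [Finset.card_univ, Fintype.card_fin]
    rw [Finset.card_erase_of_mem hi]
    omega
  have h2 : T ≤ ci + (n - 1) * (2 * ci + 1) := by
    calc T = ci + ∑ j ∈ (Dset n α β).erase i, (st hn α β v T).1 j := by
          rw [← hsplit, hsum]
      _ ≤ ci + ((Dset n α β).erase i).card * (2 * ci + 1) := by omega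
      _ ≤ ci + (n - 1) * (2 * ci + 1) := by
          have := Nat.mul_le_mul_right (2 * ci + 1) hcard
          omega
  have hn1 : 1 ≤ n := hn
  calc T ≤ ci + (n - 1) * (2 * ci + 1) := h2
    _ = (2 * n - 1) * ci + (n - 1) := by
        obtain ⟨m, rfl⟩ : ∃ m, n = m + 1 := ⟨n - 1, by omega⟩
        have h21 : 2 * (m + 1) - 1 = 2 * m + 1 := by omega
        have h11 : m + 1 - 1 = m := by omega
        rw [h21, h11]
        ring

end Counting
end Stmt5

namespace Stmt5
section Main

variable (hn : 0 < n) (α β : Fin n → NNReal) (v : ℕ → Fin n → NNReal)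

/-- L1: an agent's number of high goods seen is controlled by the highs it received. -/
lemma Hbound {i : Fin n} (hi : i ∈ Dset n α β) (T : ℕ) :
    ((range T).filter fun t => v t i = α i).card
      ≤ (st hn α β v T).2 i + 2 * ((n - 1) * ((st hn α β v T).2 i + 1)) := by
  classical
  set h := (st hn α β v T).2 i with hh0
  set A := (range T).filter fun t => v t i = α i with hA
  -- split A into: (sig = i), (sig ≠ i ∧ SS nonempty), (sig ≠ i ∧ ¬ SS nonempty)
  have hsplit1 := Finset.card_filter_add_card_filter_not
    (s := A) (fun t => sig hn α β v t = i)
  have hsplit2 := Finset.card_filter_add_card_filter_not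
    (s := A.filter fun t => ¬ sig hn α β v t = i) (fun t => (SS hn α β v t).Nonempty)
  -- i not hungry fact: at any time t ∈ A with i ∉ SS t, cmin ≤ hh t i
  have hsated : ∀ t ∈ A, i ∉ SS hn α β v t →
      cmin (Dset n α β) (st hn α β v t).1 ≤ (st hn α β v t).2 i := by
    intro t ht hnot
    rw [hA, Finset.mem_filter] at ht
    by_contra hcon
    push_neg at hcon
    exact hnot (by rw [SS, Finset.mem_filter]; exact ⟨hi, ht.2, hcon⟩)
  -- part 1 : served
  have hP1 : (A.filter fun t => sig hn α β v t = i).card ≤ h := by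
    apply card_le_of_mono_inj (f := fun t => (st hn α β v t).2 i)
    · intro t ht
      simp only [hA, Finset.mem_filter, Finset.mem_range] at ht
      obtain ⟨⟨htT, hval⟩, hsig⟩ := ht
      have hstep : (st hn α β v t).2 i < (st hn α β v (t + 1)).2 i := by
        rw [st_succ_snd, if_pos ⟨hsig.symm, hval⟩]; omega
      calc (st hn α β v t).2 i < (st hn α β v (t + 1)).2 i := hstep
        _ ≤ h := by rw [hh0]; exact hh_mono hn α β v htT i
    · intro t ht t' ht' htt'
      simp only [hA, Finset.mem_filter, Finset.mem_range] at ht ht'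
      obtain ⟨⟨htT, hval⟩, hsig⟩ := ht
      have hstep : (st hn α β v t).2 i < (st hn α β v (t + 1)).2 i := by
        rw [st_succ_snd, if_pos ⟨hsig.symm, hval⟩]; omega
      exact hstep.trans_le (hh_mono hn α β v htt' i)
  -- part 2 : stolen in a tier-1 step
  have hP2 : ((A.filter fun t => ¬ sig hn α β v t = i).filter
      fun t => (SS hn α β v t).Nonempty).card ≤ (n - 1) * (h + 1) := by
    apply card_le_of_pair_inj (g := fun t => sig hn α β v t)
      (f := fun t => (st hn α β v t).2 (sig hn α β v t)) (i := i)
    · intro t ht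
      simp only [Finset.mem_filter] at ht
      exact ht.1.2
    · intro t ht
      simp only [hA, Finset.mem_filter, Finset.mem_range] at ht
      obtain ⟨⟨⟨htT, hval⟩, hne⟩, hS⟩ := ht
      have hspec := sig_spec1 hn α β v hS
      have hwle : (st hn α β v t).2 (sig hn α β v t) ≤ (st hn α β v t).2 i := by
        by_cases hiS : i ∈ SS hn α β v t
        · exact hspec.2.1 i hiS
        · have h1 : cmin (Dset n α β) (st hn α β v t).1 ≤ (st hn α β v t).2 i :=
            hsated t (by rw [hA, Finset.mem_filter]; exact ⟨Finset.mem_range.mpr htT, hval⟩) hiS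
          have hmem := hspec.1
          rw [SS, Finset.mem_filter] at hmem
          omega
      have : (st hn α β v t).2 i ≤ h := by rw [hh0]; exact hh_mono hn α β v htT.le i
      omega
    · intro t ht t' ht' htt' hgg
      simp only [hA, Finset.mem_filter, Finset.mem_range] at ht ht'
      obtain ⟨⟨⟨htT, hval⟩, hne⟩, hS⟩ := ht
      have hspec := sig_spec1 hn α β v hS
      have hmem := hspec.1
      rw [SS, Finset.mem_filter] at hmem
      set w := sig hn α β v t with hw
      have hstep : (st hn α β v t).2 w < (st hn α β v (t + 1)).2 w := by
        rw [st_succ_snd, if_pos ⟨rfl, hmem.2.1⟩]; omega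
      rw [← hgg]
      exact hstep.trans_le (hh_mono hn α β v htt' w)
  -- part 3 : lost in a tier-2 step
  have hP3 : ((A.filter fun t => ¬ sig hn α β v t = i).filter
      fun t => ¬ (SS hn α β v t).Nonempty).card ≤ (n - 1) * (h + 1) := by
    have hD : (Dset n α β).Nonempty := ⟨i, hi⟩
    apply card_le_of_pair_inj (g := fun t => sig hn α β v t)
      (f := fun t => (st hn α β v t).1 (sig hn α β v t)) (i := i)
    · intro t ht
      simp only [Finset.mem_filter] at ht
      exact ht.1.2
    · intro t ht
      simp only [hA, Finset.mem_filter, Finset.mem_range] at ht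
      obtain ⟨⟨⟨htT, hval⟩, hne⟩, hS⟩ := ht
      have hmem := sig_mem_MM hn α β v hD hS
      rw [MM, Finset.mem_filter] at hmem
      have hiS : i ∉ SS hn α β v t := fun hin => hS ⟨i, hin⟩
      have h1 : cmin (Dset n α β) (st hn α β v t).1 ≤ (st hn α β v t).2 i :=
        hsated t (by rw [hA, Finset.mem_filter]; exact ⟨Finset.mem_range.mpr htT, hval⟩) hiS
      have : (st hn α β v t).2 i ≤ h := by rw [hh0]; exact hh_mono hn α β v htT.le i
      omega
    · intro t ht t' ht' htt' hgg
      simp only [hA, Finset.mem_filter, Finset.mem_range] at ht ht'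
      obtain ⟨⟨⟨htT, hval⟩, hne⟩, hS⟩ := ht
      set w := sig hn α β v t with hw
      have hstep : (st hn α β v t).1 w < (st hn α β v (t + 1)).1 w := by
        rw [st_succ_fst, if_pos rfl]; omega
      rw [← hgg]
      exact hstep.trans_le (cc_mono hn α β v htt' w)
  omega

/-- Λ: if agent i received no high good by time T, it has seen at most n-1 high goods. -/
lemma lam {i : Fin n} (hi : i ∈ Dset n α β) (T : ℕ) (h0 : (st hn α β v T).2 i = 0) :
    ((range T).filter fun t => v t i = α i).card ≤ n - 1 := by
  classical
  have hD : (Dset n α β).Nonempty := ⟨i, hi⟩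
  set A := (range T).filter fun t => v t i = α i with hA
  have hhz : ∀ t ≤ T, (st hn α β v t).2 i = 0 :=
    fun t ht => Nat.le_zero.mp (h0 ▸ hh_mono hn α β v ht i)
  -- i never receives a good in A
  have hsig_ne : ∀ t ∈ A, sig hn α β v t ≠ i := by
    intro t ht hEq
    rw [hA, Finset.mem_filter, Finset.mem_range] at ht
    have : (st hn α β v t).2 i < (st hn α β v (t + 1)).2 i := by
      rw [st_succ_snd, if_pos ⟨hEq.symm, ht.2⟩]; omega
    have h1 := hhz (t + 1) ht.1
    omega
  -- beta values are distinct from alpha for members of D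
  have hαβ : β i ≠ α i := by
    rw [Dset, Finset.mem_filter] at hi
    exact ne_of_lt hi.2.2
  -- key inner claim, for ordered pairs
  have key : ∀ t ∈ A, ∀ t' ∈ A, t < t' → sig hn α β v t ≠ sig hn α β v t' := by
    intro t ht t' ht' htt' hEq
    set j := sig hn α β v t with hj
    have hjD : j ∈ Dset n α β := sig_mem_D hn α β v hD
    have hjne : j ≠ i := hsig_ne t ht
    rw [hA, Finset.mem_filter, Finset.mem_range] at ht ht'
    have hccj : 1 ≤ (st hn α β v t').1 j := by
      have : (st hn α β v t).1 j < (st hn α β v (t + 1)).1 j := by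
        rw [st_succ_fst, if_pos rfl]; omega
      have h2 := cc_mono hn α β v (by omega : t + 1 ≤ t') j
      omega
    -- analyze step t'
    by_cases hS' : (SS hn α β v t').Nonempty
    · -- i is hungry at t', so the winner j has hh = 0 and j < i; then contradictions at t
      have hcmin' : 1 ≤ cmin (Dset n α β) (st hn α β v t').1 := by
        obtain ⟨u, hu⟩ := hS'
        rw [SS, Finset.mem_filter] at hu
        omega
      have hiS' : i ∈ SS hn α β v t' := by
        rw [SS, Finset.mem_filter]
        refine ⟨hi, ht'.2, ?_⟩
        rw [hhz t' ht'.1.le]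
        omega
      have hspec := sig_spec1 hn α β v hS'
      have hhj0 : (st hn α β v t').2 j = 0 := by
        have := hspec.2.1 i hiS'
        rw [← hEq] at this
        have h2 := hhz t' ht'.1.le
        omega
      have hji : j < i := by
        have := hspec.2.2 i hiS' (by rw [← hEq, hhj0, hhz t' ht'.1.le])
        rw [← hEq] at this
        exact lt_of_le_of_ne this hjne
      -- at t, j received a good; it cannot have been a high good
      have hvtj : v t j ≠ α j := by
        intro hvt
        have : (st hn α β v t).2 j < (st hn α β v (t + 1)).2 j := by
          rw [st_succ_snd, if_pos ⟨rfl, hvt⟩]; omega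
        have h2 := hh_mono hn α β v (by omega : t + 1 ≤ t') j
        omega
      -- hence at t, the step was a tier-2 non-claimant step with j = min' MM
      have hSn : ¬ (SS hn α β v t).Nonempty := by
        intro hS
        have := (sig_spec1 hn α β v hS).1
        rw [← hj, SS, Finset.mem_filter] at this
        exact hvtj this.2.1
      have hCn : ¬ (CCs hn α β v t).Nonempty := by
        intro hC
        have := sig_spec2 hn α β v hSn hC
        rw [← hj, CCs, Finset.mem_filter] at this
        exact hvtj this.2
      have hspec3 := sig_spec3 hn α β v hSn hCn (MM_nonempty hn α β v hD t)
      -- cmin at t is 0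
      have hcmin0 : cmin (Dset n α β) (st hn α β v t).1 = 0 := by
        by_contra hcon
        exact hSn ⟨i, by
          rw [SS, Finset.mem_filter]
          exact ⟨hi, ht.2, by rw [hhz t ht.1.le]; omega⟩⟩
      -- i is not at count 0 at time t
      have hcci : 1 ≤ (st hn α β v t).1 i := by
        by_contra hcon
        push_neg at hcon
        have hiM : i ∈ MM hn α β v t := by
          rw [MM, Finset.mem_filter]
          refine ⟨hi, ?_⟩
          omega
        exact hCn ⟨i, by rw [CCs, Finset.mem_filter]; exact ⟨hiM, ht.2⟩⟩
      -- find the time s < t when i received its first good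
      obtain ⟨s, hst, hsigs⟩ := cc_pos hn α β v t i hcci
      have hvsi : v s i ≠ α i := by
        intro hvs
        have : (st hn α β v s).2 i < (st hn α β v (s + 1)).2 i := by
          rw [st_succ_snd, if_pos ⟨hsigs.symm, hvs⟩]; omega
        have h2 := hhz (s + 1) (by omega)
        omega
      have hSns : ¬ (SS hn α β v s).Nonempty := by
        intro hS
        have := (sig_spec1 hn α β v hS).1
        rw [hsigs, SS, Finset.mem_filter] at this
        exact hvsi this.2.1
      have hCns : ¬ (CCs hn α β v s).Nonempty := by
        intro hC
        have := sig_spec2 hn α β v hSns hC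
        rw [hsigs, CCs, Finset.mem_filter] at this
        exact hvsi this.2
      have hspec3s := sig_spec3 hn α β v hSns hCns (MM_nonempty hn α β v hD s)
      -- j was also at count 0 at time s, and cmin s = 0, so j ∈ MM s
      have hccjs : (st hn α β v s).1 j = 0 := by
        -- cc t j = cmin t = 0 and s < t
        have h1 : (st hn α β v t).1 j = 0 := by
          have := hspec3.1
          rw [← hj, MM, Finset.mem_filter] at this
          omega
        have := cc_mono hn α β v hst.le j
        omega
      have hcmins : cmin (Dset n α β) (st hn α β v s).1 = 0 := by
        have h1 := cmin_le (c := (st hn α β v s).1) hjD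
        omega
      have hjM : j ∈ MM hn α β v s := by
        rw [MM, Finset.mem_filter]
        exact ⟨hjD, by omega⟩
      have hij : i ≤ j := by
        have := hspec3s.2 j hjM
        rw [hsigs] at this
        exact this
      exact absurd hji (by omega)
    · -- tier-2 step at t': c_j t' = cmin t' = 0, contradiction with hccj
      have hmem := sig_mem_MM hn α β v hD hS'
      rw [← hEq, MM, Finset.mem_filter] at hmem
      have hcmin0 : cmin (Dset n α β) (st hn α β v t').1 = 0 := by
        by_contra hcon
        exact hS' ⟨i, by
          rw [SS, Finset.mem_filter]
          exact ⟨hi, ht'.2, by rw [hhz t' ht'.1.le]; omega⟩⟩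
      omega
  -- conclude: sig is injective on A and misses i
  have hinj : Set.InjOn (sig hn α β v) A := by
    intro a ha b hb hab
    rcases lt_trichotomy a b with h | h | h
    · exact absurd hab (key a ha b hb h)
    · exact h
    · exact absurd hab.symm (key b hb a ha h)
  calc A.card = (A.image (sig hn α β v)).card := (Finset.card_image_of_injOn hinj).symm
    _ ≤ (Finset.univ.erase i).card := Finset.card_le_card (by
        intro x hx
        obtain ⟨t, ht, rfl⟩ := Finset.mem_image.mp hx
        exact Finset.mem_erase.mpr ⟨hsig_ne t ht, Finset.mem_univ _⟩)
    _ = n - 1 := by rw [Finset.card_erase_of_mem (Finset.mem_univ i), Finset.card_univ,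
        Fintype.card_fin]

end Main
end Stmt5

namespace Stmt5
section Mms

lemma mms_le_of_forall (hn : 0 < n) (S : Finset ℕ) (w : ℕ → ℝ) (b : ℝ) (hb : 0 ≤ b)
    (h : ∀ P : ℕ → Fin n, ∃ j : Fin n, ∑ t ∈ S.filter (fun t => P t = j), w t ≤ b) :
    mmsN n S w ≤ b := by
  apply Real.sSup_le _ hb
  rintro x ⟨P, rfl⟩
  obtain ⟨j, hj⟩ := h P
  exact ciInf_le_of_le (Set.Finite.bddBelow (Set.finite_range _)) j hj

/-- If there are fewer goods than agents, the MMS is nonpositive. -/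
lemma mms_le_zero (hn : 0 < n) (T : ℕ) (hT : T < n) (w : ℕ → ℝ) :
    mmsN n (range T) w ≤ 0 := by
  apply mms_le_of_forall hn _ _ _ le_rfl
  intro P
  have : ¬ (Finset.univ : Finset (Fin n)) ⊆ (range T).image P := by
    intro hsub
    have h1 : n ≤ ((range T).image P).card := by
      calc n = (Finset.univ : Finset (Fin n)).card := by
            rw [Finset.card_univ, Fintype.card_fin]
        _ ≤ _ := Finset.card_le_card hsub
    have h2 : ((range T).image P).card ≤ T := by
      calc ((range T).image P).card ≤ (range T).card := Finset.card_image_le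
        _ = T := Finset.card_range T
    omega
  rw [Finset.not_subset] at this
  obtain ⟨j, _, hj⟩ := this
  refine ⟨j, ?_⟩
  have : (range T).filter (fun t => P t = j) = ∅ := by
    rw [Finset.filter_eq_empty_iff]
    intro t ht hPt
    exact hj (Finset.mem_image.mpr ⟨t, ht, hPt⟩)
  rw [this, Finset.sum_empty]

/-- The average bound: MMS is at most total value over n. -/
lemma mms_le_avg (hn : 0 < n) (T : ℕ) (w : ℕ → ℝ) (hw : ∀ t, 0 ≤ w t) :
    mmsN n (range T) w ≤ (∑ t ∈ range T, w t) / n := by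
  have htot : 0 ≤ ∑ t ∈ range T, w t := Finset.sum_nonneg fun t _ => hw t
  have hnpos : (0:ℝ) < n := by exact_mod_cast hn
  apply mms_le_of_forall hn _ _ _ (by positivity)
  intro P
  by_contra hcon
  push_neg at hcon
  have huniv : (Finset.univ : Finset (Fin n)).Nonempty := ⟨⟨0, hn⟩, Finset.mem_univ _⟩
  have hlt := Finset.sum_lt_sum_of_nonempty huniv (fun j _ => hcon j)
  rw [Finset.sum_fiberwise (range T) P w] at hlt
  have : ∑ _j : Fin n, (∑ t ∈ range T, w t) / n = ∑ t ∈ range T, w t := by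
    rw [Finset.sum_const, Finset.card_univ, Fintype.card_fin, nsmul_eq_mul]
    field_simp
  rw [this] at hlt
  exact lt_irrefl _ hlt

/-- The high-free-bundle bound: if there are fewer than `n` high goods, some bundle
contains only low goods. -/
lemma mms_le_lows (hn : 0 < n) (T : ℕ) (w : ℕ → ℝ) (b : ℝ) (hb : 0 ≤ b)
    (High : Finset ℕ) (HighT : High ⊆ range T)
    (hlow : ∀ t ∈ range T, t ∉ High → w t ≤ b) (hw : ∀ t, 0 ≤ w t)
    (hHn : High.card < n) :
    mmsN n (range T) w ≤ b * ((T:ℝ) - High.card) / ((n:ℝ) - High.card) := by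
  set H := High.card with hHdef
  have hd : (0:ℝ) < (n:ℝ) - H := by
    have : (H:ℝ) < n := by exact_mod_cast hHn
    linarith
  have hHT : H ≤ T := by
    calc High.card ≤ (range T).card := Finset.card_le_card HighT
      _ = T := Finset.card_range T
  have hTH : (0:ℝ) ≤ (T:ℝ) - H := by
    have : (H:ℝ) ≤ T := by exact_mod_cast hHT
    linarith
  apply mms_le_of_forall hn _ _ _ (by positivity)
  intro P
  set Free := (Finset.univ : Finset (Fin n)) \ High.image P with hFree
  have hFreeCard : n - H ≤ Free.card := by
    rw [hFree, Finset.card_sdiff_of_subset (Finset.subset_univ _)]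
    have h1 : (High.image P).card ≤ H := Finset.card_image_le
    have h2 : (Finset.univ : Finset (Fin n)).card = n := by
      rw [Finset.card_univ, Fintype.card_fin]
    omega
  have hFreeNe : Free.Nonempty := by
    rw [← Finset.card_pos]
    omega
  -- total value in free bundles is at most b * (T - H)
  have hsum : ∑ j ∈ Free, ∑ t ∈ (range T).filter (fun t => P t = j), w t
      ≤ b * ((T:ℝ) - H) := by
    rw [Finset.sum_fiberwise_eq_sum_filter (range T) Free P w]
    have hsub : (range T).filter (fun t => P t ∈ Free) ⊆ (range T) \ High := by
      intro t ht
      rw [Finset.mem_filter] at ht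
      rw [Finset.mem_sdiff]
      refine ⟨ht.1, fun hmem => ?_⟩
      have : P t ∈ High.image P := Finset.mem_image.mpr ⟨t, hmem, rfl⟩
      rw [hFree, Finset.mem_sdiff] at ht
      exact ht.2.2 this
    calc ∑ t ∈ (range T).filter (fun t => P t ∈ Free), w t
        ≤ ∑ t ∈ (range T) \ High, w t :=
          Finset.sum_le_sum_of_subset_of_nonneg hsub (fun t _ _ => hw t)
      _ ≤ ∑ _t ∈ (range T) \ High, b := by
          apply Finset.sum_le_sum
          intro t ht
          rw [Finset.mem_sdiff] at ht
          exact hlow t ht.1 ht.2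
      _ = ((range T) \ High).card * b := by rw [Finset.sum_const, nsmul_eq_mul]
      _ = b * ((T:ℝ) - H) := by
          rw [Finset.card_sdiff_of_subset HighT, Finset.card_range]
          rw [Nat.cast_sub hHT]
          ring
  -- hence some free bundle is small
  by_contra hcon
  push_neg at hcon
  have hlt := Finset.sum_lt_sum_of_nonempty hFreeNe (fun j hj => hcon j)
  have hge : b * ((T:ℝ) - H) ≤ ∑ _j ∈ Free, b * ((T:ℝ) - H) / ((n:ℝ) - H) := by
    rw [Finset.sum_const, nsmul_eq_mul]
    have h1 : ((n:ℝ) - H) ≤ (Free.card : ℝ) := by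
      have h2 : ((n - H : ℕ) : ℝ) ≤ (Free.card : ℝ) := by exact_mod_cast hFreeCard
      have h3 : ((n - H : ℕ) : ℝ) = (n:ℝ) - H := by
        rw [Nat.cast_sub hHn.le]
      linarith
    have h4 : 0 ≤ b * ((T:ℝ) - H) / ((n:ℝ) - H) := by positivity
    calc b * ((T:ℝ) - H) = ((n:ℝ) - H) * (b * ((T:ℝ) - H) / ((n:ℝ) - H)) := by
          field_simp
      _ ≤ (Free.card : ℝ) * (b * ((T:ℝ) - H) / ((n:ℝ) - H)) := by
          apply mul_le_mul_of_nonneg_right h1 h4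
  linarith

end Mms
end Stmt5

namespace Stmt5
section Bval

variable (hn : 0 < n) (α β : Fin n → NNReal) (v : ℕ → Fin n → NNReal)

lemma bval_eq (hv2 : ∀ (t : ℕ) (j : Fin n), v t j = α j ∨ v t j = β j)
    {i : Fin n} (hi : i ∈ Dset n α β) (T : ℕ) :
    bval n v i (bundle n (Falg hn α β) v i T) =
      ((st hn α β v T).2 i : ℝ) * (α i : ℝ) +
      (((st hn α β v T).1 i : ℝ) - ((st hn α β v T).2 i : ℝ)) * (β i : ℝ) := by
  rw [bval, bundle_eq hn α β v i T]
  set Bd := (range T).filter fun t => sig hn α β v t = i with hBd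
  rw [← Finset.sum_filter_add_sum_filter_not Bd (fun t => v t i = α i)]
  have h1 : Bd.filter (fun t => v t i = α i)
      = (range T).filter fun t => sig hn α β v t = i ∧ v t i = α i := by
    rw [hBd, Finset.filter_filter]
  have hcard1 : (Bd.filter (fun t => v t i = α i)).card = (st hn α β v T).2 i := by
    rw [h1, hh_eq_card]
  have hs1 : ∑ t ∈ Bd.filter (fun t => v t i = α i), ((v t i : ℝ))
      = ((st hn α β v T).2 i : ℝ) * (α i : ℝ) := by
    rw [← hcard1]
    rw [Finset.sum_congr rfl (fun t ht => ?_), Finset.sum_const, nsmul_eq_mul]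
    rw [Finset.mem_filter] at ht
    rw [ht.2]
  have hcard2 : (Bd.filter (fun t => ¬ v t i = α i)).card
      = (st hn α β v T).1 i - (st hn α β v T).2 i := by
    have := Finset.card_filter_add_card_filter_not (s := Bd) (fun t => v t i = α i)
    have hc : Bd.card = (st hn α β v T).1 i := by rw [hBd, ← cc_eq_card]
    omega
  have hs2 : ∑ t ∈ Bd.filter (fun t => ¬ v t i = α i), ((v t i : ℝ))
      = (((st hn α β v T).1 i : ℝ) - ((st hn α β v T).2 i : ℝ)) * (β i : ℝ) := by
    rw [Finset.sum_congr rfl (fun t ht => ?_), Finset.sum_const, nsmul_eq_mul, hcard2]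
    · rw [Nat.cast_sub (hh_le_cc hn α β v T i)]
    · rw [Finset.mem_filter] at ht
      rcases hv2 t i with h | h
      · exact absurd h ht.2
      · rw [h]
  rw [hs1, hs2]

end Bval
end Stmt5

namespace Stmt5
section RealArith

lemma realGoal1 {m h c H T a b : ℝ} (hm : 0 ≤ m) (hm01 : m = 0 ∨ 1 ≤ m)
    (h1 : 1 ≤ h) (hc1 : 1 ≤ c) (hch : h ≤ c)
    (hL1 : H ≤ h + 2 * (m * (h + 1))) (hraz : T ≤ (2 * m + 1) * c + m)
    (hb : 0 < b) (hba : b < a) (hHT : H ≤ T) :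
    H * a + (T - H) * b ≤ (m + 1) * ((2 * m + 1) * (h * a + (c - h) * b)) := by
  have hA : H ≤ (m + 1) * (2 * m + 1) * h := by
    rcases hm01 with hm0 | hm1
    · subst hm0; nlinarith
    · nlinarith [mul_nonneg (mul_nonneg hm hm) (by linarith : (0:ℝ) ≤ h - 1),
        mul_nonneg hm (by linarith : (0:ℝ) ≤ h - 1),
        mul_nonneg (mul_nonneg hm (by linarith : (0:ℝ) ≤ m - 1)) (by linarith : (0:ℝ) ≤ h)]
  have hB : T ≤ (m + 1) * (2 * m + 1) * c := by
    nlinarith [mul_nonneg hm (by linarith : (0:ℝ) ≤ c - 1),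
      mul_nonneg (mul_nonneg hm hm) (by linarith : (0:ℝ) ≤ c)]
  have hX1 : (0:ℝ) ≤ (a - b) * ((m + 1) * (2 * m + 1) * h - H) :=
    mul_nonneg (by linarith) (by linarith)
  have hX2 : (0:ℝ) ≤ b * ((m + 1) * (2 * m + 1) * c - T) :=
    mul_nonneg (le_of_lt hb) (by linarith)
  nlinarith [hX1, hX2]

lemma realGoal2 {m h c H T a b : ℝ} (hm : 0 ≤ m)
    (h1 : 1 ≤ h) (hc1 : 1 ≤ c) (hch : h ≤ c)
    (hL1 : H ≤ h + 2 * (m * (h + 1))) (hraz : T ≤ (2 * m + 1) * c + m)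
    (hb : 0 < b) (hba : b < a) (hHT : H ≤ T) :
    H * a + (T - H) * b ≤ (m + 1) * (4 * (h * a + (c - h) * b)) := by
  have hA4 : H ≤ 4 * (m + 1) * h := by
    nlinarith [mul_nonneg hm (by linarith : (0:ℝ) ≤ h - 1)]
  have hB4 : T ≤ 4 * (m + 1) * c := by
    by_cases hT2 : T ≤ 2 * m + 2
    · nlinarith [mul_nonneg (by linarith : (0:ℝ) ≤ m + 1) (by linarith : (0:ℝ) ≤ c - 1)]
    · push_neg at hT2
      nlinarith [mul_nonneg hm (by linarith : (0:ℝ) ≤ T - 2 * m - 2),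
        mul_nonneg hm hm]
  have hX1 : (0:ℝ) ≤ (a - b) * (4 * (m + 1) * h - H) :=
    mul_nonneg (by linarith) (by linarith)
  have hX2 : (0:ℝ) ≤ b * (4 * (m + 1) * c - T) :=
    mul_nonneg (le_of_lt hb) (by linarith)
  nlinarith [hX1, hX2]

lemma realGoal1' {m c H T b dV : ℝ} (hm : 0 ≤ m)
    (hc1 : 1 ≤ c) (hHm : H ≤ m) (hTm : m + 1 ≤ T)
    (hraz : T ≤ (2 * m + 1) * c + m) (hb : 0 < b)
    (hcb : c * b ≤ dV) :
    b * (T - H) / ((m + 1) - H) ≤ (2 * m + 1) * dV := by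
  have hdpos : (0:ℝ) < (m + 1) - H := by linarith
  have key1 : b * (T - H) / ((m + 1) - H) ≤ b * (T - m) := by
    rw [div_le_iff₀ hdpos]
    nlinarith [mul_nonneg (by linarith : (0:ℝ) ≤ m - H) (by linarith : (0:ℝ) ≤ T - m - 1),
      le_of_lt hb]
  have key2 : b * (T - m) ≤ (2 * m + 1) * (c * b) := by
    nlinarith [le_of_lt hb]
  have key3 : (2 * m + 1) * (c * b) ≤ (2 * m + 1) * dV :=
    mul_le_mul_of_nonneg_left hcb (by linarith)
  linarith

end RealArith
end Stmt5
/-- There is a deterministic online allocation algorithm such that, on every personalized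
`2`-value stream, every type-1 agent (`α i > β i > 0`) gets at least a `1/(2n−1)` fraction of
its maximin share at every time step, improving to `1/4` once it has seen at least `n`
high-valued goods. -/
theorem statement5 (n : ℕ) (hn : 1 ≤ n) (α β : Fin n → NNReal) (hβα : ∀ i, β i ≤ α i) :
    ∃ F : List (Fin n → NNReal) → Fin n,
      ∀ v : ℕ → Fin n → NNReal, (∀ (t : ℕ) (i : Fin n), v t i = α i ∨ v t i = β i) →
        ∀ i : Fin n, 0 < β i → β i < α i →
          ∀ T : ℕ,
            mmsN n (Finset.range T) (fun t => (v t i : ℝ)) / (2 * (n : ℝ) - 1) ≤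
              bval n v i (bundle n F v i T) ∧
            (n ≤ ((Finset.range T).filter fun t => v t i = α i).card →
              mmsN n (Finset.range T) (fun t => (v t i : ℝ)) / 4 ≤
                bval n v i (bundle n F v i T)) := by
  classical
  have hn0 : 0 < n := hn
  refine ⟨Stmt5.Falg hn0 α β, ?_⟩
  intro v hv i hβi hαβi T
  obtain ⟨m, rfl⟩ : ∃ m, n = m + 1 := ⟨n - 1, by omega⟩
  have hiD : i ∈ Stmt5.Dset (m+1) α β := by
    rw [Stmt5.Dset, Finset.mem_filter]
    exact ⟨Finset.mem_univ i, hβi, hαβi⟩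
  have hD : (Stmt5.Dset (m+1) α β).Nonempty := ⟨i, hiD⟩
  set c : ℕ := (Stmt5.st hn0 α β v T).1 i with hcd
  set h : ℕ := (Stmt5.st hn0 α β v T).2 i with hhd
  set H : ℕ := ((range T).filter fun t => v t i = α i).card with hHd
  have hhc : h ≤ c := Stmt5.hh_le_cc hn0 α β v T i
  have natRaz : T ≤ (2 * m + 1) * c + m := by
    have := Stmt5.razor hn0 α β v hD hiD T
    have e1 : 2 * (m + 1) - 1 = 2 * m + 1 := by omega
    have e2 : m + 1 - 1 = m := by omega
    rw [e1, e2] at this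
    exact this
  have natL1 : H ≤ h + 2 * (m * (h + 1)) := by
    have := Stmt5.Hbound hn0 α β v hiD T
    have e2 : m + 1 - 1 = m := by omega
    rw [e2] at this
    exact this
  have hlam : h = 0 → H ≤ m := by
    intro h0
    have := Stmt5.lam hn0 α β v hiD T h0
    have e2 : m + 1 - 1 = m := by omega
    rw [e2] at this
    exact this
  have hHT : H ≤ T := by
    calc H ≤ (range T).card := Finset.card_le_card (Finset.filter_subset _ _)
      _ = T := Finset.card_range T
  -- real facts
  have hβr : (0:ℝ) < (β i : ℝ) := by exact_mod_cast hβi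
  have hαβr : ((β i : ℝ)) < (α i : ℝ) := by exact_mod_cast hαβi
  have hVeq := Stmt5.bval_eq hn0 α β v hv hiD T
  rw [← hcd, ← hhd] at hVeq
  set V : ℝ := bval (m+1) v i (bundle (m+1) (Stmt5.Falg hn0 α β) v i T) with hVd
  clear_value c h H V
  have hchR : (h:ℝ) ≤ (c:ℝ) := by exact_mod_cast hhc
  have hV0 : 0 ≤ V := by
    rw [hVeq]
    have h1 : 0 ≤ ((h:ℝ)) * (α i : ℝ) := by positivity
    have h2 : 0 ≤ (((c:ℝ)) - ((h:ℝ))) * (β i : ℝ) :=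
      mul_nonneg (by linarith) (le_of_lt hβr)
    linarith
  have hcβV : (c:ℝ) * (β i : ℝ) ≤ V := by
    rw [hVeq]
    nlinarith [mul_nonneg (Nat.cast_nonneg h : (0:ℝ) ≤ h) (le_of_lt (sub_pos.mpr hαβr))]
  have h2n1 : (0:ℝ) < 2 * ((m+1 : ℕ) : ℝ) - 1 := by
    push_cast
    linarith [Nat.cast_nonneg (α := ℝ) m]
  have hmR : (0:ℝ) ≤ (m:ℝ) := Nat.cast_nonneg m
  have hm01 : (m:ℝ) = 0 ∨ (1:ℝ) ≤ (m:ℝ) := by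
    rcases Nat.eq_zero_or_pos m with h0 | h1
    · left; rw [h0]; norm_num
    · right; exact_mod_cast h1
  have natRazR : (T:ℝ) ≤ (2 * (m:ℝ) + 1) * c + m := by exact_mod_cast natRaz
  have natL1R : (H:ℝ) ≤ (h:ℝ) + 2 * ((m:ℝ) * (h + 1)) := by exact_mod_cast natL1
  have hHTR : (H:ℝ) ≤ (T:ℝ) := by exact_mod_cast hHT
  -- total value split
  have htot : ∑ t ∈ range T, ((v t i : ℝ))
      = (H:ℝ) * (α i : ℝ) + ((T:ℝ) - H) * (β i : ℝ) := by
    rw [← Finset.sum_filter_add_sum_filter_not (range T) (fun t => v t i = α i)]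
    have hs1 : ∑ t ∈ (range T).filter (fun t => v t i = α i), ((v t i : ℝ))
        = (H:ℝ) * (α i : ℝ) := by
      rw [Finset.sum_congr rfl (fun t ht => ?_), Finset.sum_const, nsmul_eq_mul, ← hHd]
      rw [Finset.mem_filter] at ht
      rw [ht.2]
    have hs2 : ∑ t ∈ (range T).filter (fun t => ¬ v t i = α i), ((v t i : ℝ))
        = ((T:ℝ) - H) * (β i : ℝ) := by
      have hcard : ((range T).filter (fun t => ¬ v t i = α i)).card = T - H := by
        have := Finset.card_filter_add_card_filter_not (s := range T)
          (fun t => v t i = α i)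
        rw [Finset.card_range] at this
        omega
      rw [Finset.sum_congr rfl (fun t ht => ?_), Finset.sum_const, nsmul_eq_mul, hcard]
      · rw [Nat.cast_sub hHT]
      · rw [Finset.mem_filter] at ht
        rcases hv t i with h' | h'
        · exact absurd h' ht.2
        · rw [h']
    rw [hs1, hs2]
  have hw : ∀ t, (0:ℝ) ≤ (v t i : ℝ) := fun t => (v t i).coe_nonneg
  have hnn : (0:ℝ) < ((m+1:ℕ):ℝ) := by exact_mod_cast Nat.succ_pos m
  constructor
  · -- main goal 1
    rw [div_le_iff₀ h2n1]
    by_cases hTn : T < m + 1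
    · have hμ := Stmt5.mms_le_zero hn0 T hTn (fun t => (v t i : ℝ))
      have : 0 ≤ V * (2 * ((m+1:ℕ):ℝ) - 1) := mul_nonneg hV0 (le_of_lt h2n1)
      linarith
    · push_neg at hTn
      have hTnR : ((m:ℝ) + 1) ≤ (T:ℝ) := by exact_mod_cast hTn
      have hc1 : 1 ≤ c := by
        rcases Nat.eq_zero_or_pos c with h0 | h1
        · rw [h0, Nat.mul_zero, Nat.zero_add] at natRaz; omega
        · exact h1
      have hc1R : (1:ℝ) ≤ (c:ℝ) := by exact_mod_cast hc1
      have hfin : 2 * ((m+1:ℕ):ℝ) - 1 = 2 * (m:ℝ) + 1 := by push_cast; ring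
      rw [hfin]
      by_cases hHn : H < m + 1
      · -- U2 route
        have hμ := Stmt5.mms_le_lows hn0 T (fun t => (v t i : ℝ)) (β i) (le_of_lt hβr)
          ((range T).filter fun t => v t i = α i) (Finset.filter_subset _ _)
          (fun t ht hnot => by
            rcases hv t i with h' | h'
            · exact absurd (Finset.mem_filter.mpr ⟨ht, h'⟩) hnot
            · simp [h'])
          hw (by rw [← hHd]; exact hHn)
        rw [← hHd] at hμ
        have hHmR : (H:ℝ) ≤ (m:ℝ) := by exact_mod_cast (by omega : H ≤ m)
        have hkey := Stmt5.realGoal1' (m := (m:ℝ)) (c := (c:ℝ)) (H := (H:ℝ)) (T := (T:ℝ))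
          (b := (β i : ℝ)) (dV := V) hmR hc1R hHmR hTnR natRazR hβr hcβV
        have hcast : (((m+1:ℕ):ℝ)) = (m:ℝ) + 1 := by push_cast; ring
        rw [hcast] at hμ
        calc mmsN (m+1) (range T) (fun t => (v t i : ℝ))
            ≤ (β i : ℝ) * ((T:ℝ) - H) / (((m:ℝ) + 1) - H) := hμ
          _ ≤ (2 * (m:ℝ) + 1) * V := hkey
          _ = V * (2 * (m:ℝ) + 1) := by ring
      · -- H ≥ n route
        push_neg at hHn
        have h1 : 1 ≤ h := by
          rcases Nat.eq_zero_or_pos h with h0 | h1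
          · have := hlam h0; omega
          · exact h1
        have h1R : (1:ℝ) ≤ (h:ℝ) := by exact_mod_cast h1
        have hμ := Stmt5.mms_le_avg hn0 T (fun t => (v t i : ℝ)) hw
        rw [htot] at hμ
        have hmain := Stmt5.realGoal1 (m := (m:ℝ)) (h := (h:ℝ)) (c := (c:ℝ)) (H := (H:ℝ))
          (T := (T:ℝ)) (a := (α i : ℝ)) (b := (β i : ℝ))
          hmR hm01 h1R hc1R hchR natL1R natRazR hβr hαβr hHTR
        rw [← hVeq] at hmain
        calc mmsN (m+1) (range T) (fun t => (v t i : ℝ))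
            ≤ ((H:ℝ) * (α i : ℝ) + ((T:ℝ) - H) * (β i : ℝ)) / ((m+1:ℕ):ℝ) := hμ
          _ ≤ V * (2 * (m:ℝ) + 1) := by
              rw [div_le_iff₀ hnn]
              push_cast
              push_cast at hmain
              nlinarith [hmain]
  · -- main goal 2
    intro hHge
    rw [div_le_iff₀ (by norm_num : (0:ℝ) < 4)]
    have hTn : m + 1 ≤ T := le_trans hHge hHT
    have hTnR : ((m:ℝ) + 1) ≤ (T:ℝ) := by exact_mod_cast hTn
    have hc1 : 1 ≤ c := by
      rcases Nat.eq_zero_or_pos c with h0 | h1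
      · rw [h0, Nat.mul_zero, Nat.zero_add] at natRaz; omega
      · exact h1
    have hc1R : (1:ℝ) ≤ (c:ℝ) := by exact_mod_cast hc1
    have h1 : 1 ≤ h := by
      rcases Nat.eq_zero_or_pos h with h0 | h1
      · have := hlam h0; omega
      · exact h1
    have h1R : (1:ℝ) ≤ (h:ℝ) := by exact_mod_cast h1
    have hμ := Stmt5.mms_le_avg hn0 T (fun t => (v t i : ℝ)) hw
    rw [htot] at hμ
    have hmain := Stmt5.realGoal2 (m := (m:ℝ)) (h := (h:ℝ)) (c := (c:ℝ)) (H := (H:ℝ))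
      (T := (T:ℝ)) (a := (α i : ℝ)) (b := (β i : ℝ))
      hmR h1R hc1R hchR natL1R natRazR hβr hαβr hHTR
    rw [← hVeq] at hmain
    calc mmsN (m+1) (range T) (fun t => (v t i : ℝ))
        ≤ ((H:ℝ) * (α i : ℝ) + ((T:ℝ) - H) * (β i : ℝ)) / ((m+1:ℕ):ℝ) := hμ
      _ ≤ V * 4 := by
          rw [div_le_iff₀ hnn]
          push_cast
          push_cast at hmain
          nlinarith [hmain]

end
end

section
/- Let n ≥ 2 be an integer, α ≥ n a real number, and ε > 0. Define a stream of 2n−1 goods by v t i = 1 for all agents i when t < n, and v t i = α for all agents i when n ≤ t ≤ 2n−2. Then for every assignment σ : Fin (2n−1) → Fin n of these goods to agents (which may be chosen with full knowledge of the entire instance), there exists a time step T with 1 ≤ T ≤ 2n−1 such that the partial allocation with bundles A_i^T = {t < T : σ t = i} is not (1/n + ε)-MMS; that is, some agent i has Σ_{t ∈ A_i^T} v t i < (1/n + ε) · μ_i^n(T). -/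
open Finset

noncomputable section

lemma le_mmsG' {G : Type*} (n : ℕ) (hn : 0 < n) (S : Finset G) (w : G → ℝ)
    (hw : ∀ g ∈ S, 0 ≤ w g) (P : G → Fin n) (c : ℝ)
    (hc : ∀ j : Fin n, c ≤ ∑ g ∈ S.filter (fun g => P g = j), w g) :
    c ≤ sSup { x : ℝ | ∃ P : G → Fin n,
      x = ⨅ j : Fin n, ∑ g ∈ S.filter (fun g => P g = j), w g } := by
  haveI : Nonempty (Fin n) := ⟨⟨0, hn⟩⟩
  have bdd : BddAbove { x : ℝ | ∃ P : G → Fin n,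
      x = ⨅ j : Fin n, ∑ g ∈ S.filter (fun g => P g = j), w g } := by
    refine ⟨∑ g ∈ S, w g, ?_⟩
    rintro x ⟨Q, rfl⟩
    refine le_trans (ciInf_le ?_ ⟨0, hn⟩) ?_
    · exact (Set.finite_range _).bddBelow
    · exact Finset.sum_le_sum_of_subset_of_nonneg (Finset.filter_subset _ _)
        (fun g hg _ => hw g hg)
  refine le_trans ?_ (le_csSup bdd ⟨P, rfl⟩)
  exact le_ciInf hc


/-- The `n`-agent maximin share of the additive valuation `w` over the finite set `S` of goods:
the maximum, over partitions of `S` into `n` (possibly empty) bundles, of the minimum value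
of a bundle. -/
def mmsG {G : Type*} (n : ℕ) (S : Finset G) (w : G → ℝ) : ℝ :=
  sSup { x : ℝ | ∃ P : G → Fin n,
    x = ⨅ j : Fin n, ∑ g ∈ S.filter (fun g => P g = j), w g }

/-- For the stream of `2n−1` goods where the first `n` goods are worth `1` to everyone and the
last `n−1` goods are worth `α ≥ n` to everyone, every assignment of these goods to the agents
fails to be `(1/n + ε)`-MMS at the end of some time step `1 ≤ T ≤ 2n−1`. -/
theorem statement6 (n : ℕ) (hn : 2 ≤ n) (α : ℝ) (hα : (n : ℝ) ≤ α) (ε : ℝ) (hε : 0 < ε)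
    (σ : Fin (2 * n - 1) → Fin n) :
    ∃ T : ℕ, 1 ≤ T ∧ T ≤ 2 * n - 1 ∧
      ∃ i : Fin n,
        (∑ t ∈ Finset.univ.filter (fun t : Fin (2 * n - 1) => (t : ℕ) < T ∧ σ t = i),
            (if (t : ℕ) < n then (1 : ℝ) else α)) <
          (1 / (n : ℝ) + ε) *
            mmsG n (Finset.univ.filter fun t : Fin (2 * n - 1) => (t : ℕ) < T)
              (fun t => if (t : ℕ) < n then (1 : ℝ) else α) := by
  have npos : 0 < n := by omega
  have hnm : n ≤ 2 * n - 1 := by omega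
  have hnR : (0:ℝ) < n := by exact_mod_cast npos
  have hαpos : (0:ℝ) ≤ α := le_trans hnR.le hα
  set w : Fin (2 * n - 1) → ℝ := fun t => if (t : ℕ) < n then (1 : ℝ) else α with hw
  have wnonneg : ∀ t, 0 ≤ w t := by
    intro t; simp only [hw]; split <;> [norm_num; exact hαpos]
  have hεn : (0:ℝ) < 1 / (n:ℝ) + ε := by positivity
  -- card of S1 = filter (t < n) is n
  have cardS1 : (Finset.univ.filter fun t : Fin (2 * n - 1) => (t : ℕ) < n).card = n := by
    have himg : (Finset.univ.filter fun t : Fin (2 * n - 1) => (t : ℕ) < n).image Fin.val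
        = Finset.range n := by
      ext a
      simp only [Finset.mem_image, Finset.mem_filter, Finset.mem_univ, true_and,
        Finset.mem_range]
      constructor
      · rintro ⟨t, ht, rfl⟩; exact ht
      · intro ha; exact ⟨⟨a, by omega⟩, ha, rfl⟩
    have := Finset.card_image_of_injective
      (Finset.univ.filter fun t : Fin (2 * n - 1) => (t : ℕ) < n) Fin.val_injective
    rw [himg, Finset.card_range] at this
    omega
  -- mms at T = n is ≥ 1
  have mms1 : (1:ℝ) ≤ mmsG n (Finset.univ.filter fun t : Fin (2 * n - 1) => (t : ℕ) < n) w := by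
    refine le_mmsG' n npos _ w (fun g _ => wnonneg g)
      (fun t => if h : (t : ℕ) < n then ⟨t, h⟩ else ⟨0, npos⟩) 1 (fun j => ?_)
    have hg : (⟨(j:ℕ), by omega⟩ : Fin (2 * n - 1)) ∈
        (Finset.univ.filter fun t : Fin (2 * n - 1) => (t : ℕ) < n).filter
          (fun g : Fin (2 * n - 1) => (if h : (g : ℕ) < n then (⟨g, h⟩ : Fin n) else ⟨0, npos⟩) = j) := by
      simp only [Finset.mem_filter, Finset.mem_univ, true_and]
      refine ⟨j.isLt, ?_⟩
      rw [dif_pos j.isLt]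
    have := Finset.single_le_sum (f := w) (fun t _ => wnonneg t) hg
    refine le_trans ?_ this
    simp only [hw, if_pos j.isLt]; exact le_refl 1
  -- mms at T = 2n-1 is ≥ n
  have mms2 : (n:ℝ) ≤ mmsG n (Finset.univ.filter fun t : Fin (2 * n - 1) => (t : ℕ) < 2 * n - 1) w := by
    refine le_mmsG' n npos _ w (fun g _ => wnonneg g)
      (fun t => if h : (t : ℕ) < n then ⟨n - 1, by omega⟩ else ⟨(t : ℕ) - n, by omega⟩)
      (n : ℝ) (fun j => ?_)
    rcases lt_or_eq_of_le (Nat.lt_succ_iff.mp (by omega : (j:ℕ) < n - 1 + 1)) with hj | hj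
    · -- bundle gets the α-good n + j
      set g : Fin (2 * n - 1) := ⟨n + (j:ℕ), by omega⟩ with hgdef
      have hgv : (g : ℕ) = n + (j:ℕ) := rfl
      have hg : g ∈
          (Finset.univ.filter fun t : Fin (2 * n - 1) => (t : ℕ) < 2 * n - 1).filter
            (fun t : Fin (2 * n - 1) => (if h : (t : ℕ) < n then (⟨n - 1, by omega⟩ : Fin n)
              else ⟨(t : ℕ) - n, by omega⟩) = j) := by
        simp only [Finset.mem_filter, Finset.mem_univ, true_and]
        refine ⟨by omega, ?_⟩
        rw [dif_neg (by omega : ¬ (g : ℕ) < n)]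
        apply Fin.ext
        simp only [hgv]
        omega
      have := Finset.single_le_sum (f := w) (fun t _ => wnonneg t) hg
      refine le_trans ?_ this
      simp only [hw]
      rw [if_neg (by omega : ¬ (g : ℕ) < n)]
      exact hα
    · -- bundle n-1 gets all unit goods
      have hsub : (Finset.univ.filter fun t : Fin (2 * n - 1) => (t : ℕ) < n) ⊆
          (Finset.univ.filter fun t : Fin (2 * n - 1) => (t : ℕ) < 2 * n - 1).filter
            (fun t : Fin (2 * n - 1) => (if h : (t : ℕ) < n then (⟨n - 1, by omega⟩ : Fin n)
              else ⟨(t : ℕ) - n, by omega⟩) = j) := by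
        intro t ht
        simp only [Finset.mem_filter, Finset.mem_univ, true_and] at ht ⊢
        refine ⟨by omega, ?_⟩
        rw [dif_pos ht]
        apply Fin.ext; simp [hj]
      have h1 : ∑ t ∈ (Finset.univ.filter fun t : Fin (2 * n - 1) => (t : ℕ) < n), w t
          = (n : ℝ) := by
        rw [Finset.sum_congr rfl (fun t ht => ?_), Finset.sum_const, cardS1,
          nsmul_eq_mul, mul_one]
        simp only [Finset.mem_filter, Finset.mem_univ, true_and] at ht
        exact if_pos ht
      rw [← h1]
      exact Finset.sum_le_sum_of_subset_of_nonneg hsub (fun t _ _ => wnonneg t)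
  by_cases hcase : ∃ i : Fin n,
      (∑ t ∈ Finset.univ.filter (fun t : Fin (2 * n - 1) => (t : ℕ) < n ∧ σ t = i), w t) <
        (1 / (n : ℝ) + ε) *
          mmsG n (Finset.univ.filter fun t : Fin (2 * n - 1) => (t : ℕ) < n) w
  · exact ⟨n, by omega, hnm, hcase⟩
  push_neg at hcase
  -- every agent holds at least one of the first n goods
  have hBcard : ∀ i : Fin n,
      ((Finset.univ.filter (fun t : Fin (2 * n - 1) => (t : ℕ) < n ∧ σ t = i)).card : ℝ)
        = ∑ t ∈ Finset.univ.filter (fun t : Fin (2 * n - 1) => (t : ℕ) < n ∧ σ t = i), w t := by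
    intro i
    rw [Finset.sum_congr rfl (fun t ht => ?_), Finset.sum_const, nsmul_eq_mul, mul_one]
    simp only [Finset.mem_filter, Finset.mem_univ, true_and] at ht
    exact if_pos ht.1
  have hpos : ∀ i : Fin n,
      1 ≤ (Finset.univ.filter (fun t : Fin (2 * n - 1) => (t : ℕ) < n ∧ σ t = i)).card := by
    intro i
    have h1 : (0:ℝ) <
        ((Finset.univ.filter (fun t : Fin (2 * n - 1) => (t : ℕ) < n ∧ σ t = i)).card : ℝ) := by
      rw [hBcard i]
      calc (0:ℝ) < (1 / (n:ℝ) + ε) * 1 := by linarith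
        _ ≤ (1 / (n:ℝ) + ε) * mmsG n (Finset.univ.filter
              fun t : Fin (2 * n - 1) => (t : ℕ) < n) w :=
            mul_le_mul_of_nonneg_left mms1 hεn.le
        _ ≤ _ := hcase i
    exact_mod_cast h1
  -- total: sum of fiber cards = n
  have htotal : ∑ i : Fin n,
      (Finset.univ.filter (fun t : Fin (2 * n - 1) => (t : ℕ) < n ∧ σ t = i)).card = n := by
    have : ∀ i : Fin n, Finset.univ.filter (fun t : Fin (2 * n - 1) => (t : ℕ) < n ∧ σ t = i)
        = (Finset.univ.filter fun t : Fin (2 * n - 1) => (t : ℕ) < n).filter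
            (fun t => σ t = i) := by
      intro i; rw [Finset.filter_filter]
    simp_rw [this]
    rw [← Finset.card_eq_sum_card_fiberwise (fun t _ => Finset.mem_univ (σ t)), cardS1]
  -- find an agent with no α-good
  have hS2card : (Finset.univ.filter fun t : Fin (2 * n - 1) => n ≤ (t : ℕ)).card = n - 1 := by
    have hcompl : Finset.univ.filter (fun t : Fin (2 * n - 1) => n ≤ (t : ℕ))
        = Finset.univ.filter (fun t : Fin (2 * n - 1) => ¬ ((t : ℕ) < n)) := by
      apply Finset.filter_congr; intro t _; simp [not_lt]
    have := Finset.card_filter_add_card_filter_not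
      (s := (Finset.univ : Finset (Fin (2 * n - 1))))
      (p := fun t : Fin (2 * n - 1) => (t : ℕ) < n)
    rw [Finset.card_univ, Fintype.card_fin] at this
    rw [hcompl]
    omega
  obtain ⟨i0, hi0⟩ : ∃ i0 : Fin n,
      i0 ∉ (Finset.univ.filter fun t : Fin (2 * n - 1) => n ≤ (t : ℕ)).image σ := by
    by_contra h
    push_neg at h
    have hsub : (Finset.univ : Finset (Fin n)) ⊆
        (Finset.univ.filter fun t : Fin (2 * n - 1) => n ≤ (t : ℕ)).image σ :=
      fun i _ => h i
    have := Finset.card_le_card hsub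
    have h2 := Finset.card_image_le
      (s := Finset.univ.filter fun t : Fin (2 * n - 1) => n ≤ (t : ℕ)) (f := σ)
    rw [Finset.card_univ, Fintype.card_fin] at this
    omega
  -- i0's bundle at T = 2n-1 equals its bundle at T = n
  have hbundle : Finset.univ.filter (fun t : Fin (2 * n - 1) => (t : ℕ) < 2 * n - 1 ∧ σ t = i0)
      = Finset.univ.filter (fun t : Fin (2 * n - 1) => (t : ℕ) < n ∧ σ t = i0) := by
    ext t
    simp only [Finset.mem_filter, Finset.mem_univ, true_and]
    constructor
    · rintro ⟨-, hσ⟩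
      refine ⟨?_, hσ⟩
      by_contra htn
      exact hi0 (Finset.mem_image.mpr ⟨t, Finset.mem_filter.mpr ⟨Finset.mem_univ t, by omega⟩, hσ⟩)
    · rintro ⟨-, hσ⟩; exact ⟨t.isLt, hσ⟩
  -- i0's bundle card is at most 1
  have hcard1 : (Finset.univ.filter (fun t : Fin (2 * n - 1) => (t : ℕ) < n ∧ σ t = i0)).card
      ≤ 1 := by
    rw [← Finset.add_sum_erase _ _ (Finset.mem_univ i0)] at htotal
    have herase : (Finset.univ.erase i0).card ≤ ∑ i ∈ Finset.univ.erase i0,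
        (Finset.univ.filter (fun t : Fin (2 * n - 1) => (t : ℕ) < n ∧ σ t = i)).card := by
      rw [Finset.card_eq_sum_ones]
      exact Finset.sum_le_sum (fun i _ => hpos i)
    rw [Finset.card_erase_of_mem (Finset.mem_univ i0), Finset.card_univ,
      Fintype.card_fin] at herase
    omega
  refine ⟨2 * n - 1, by omega, le_refl _, i0, ?_⟩
  rw [hbundle, ← hBcard i0]
  calc ((Finset.univ.filter (fun t : Fin (2 * n - 1) => (t : ℕ) < n ∧ σ t = i0)).card : ℝ)
      ≤ 1 := by exact_mod_cast hcard1
    _ < (1 / (n:ℝ) + ε) * n := by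
        rw [add_mul, one_div, inv_mul_cancel₀ (ne_of_gt hnR)]
        nlinarith
    _ ≤ (1 / (n:ℝ) + ε) *
        mmsG n (Finset.univ.filter fun t : Fin (2 * n - 1) => (t : ℕ) < 2 * n - 1) w :=
      mul_le_mul_of_nonneg_left mms2 hεn.le

end
end

section
/- Let n = 2 and let α, β : Fin 2 → ℝ≥0 satisfy β i ≤ α i for both agents i. There exists a deterministic online allocation algorithm with foresight 1 such that for every personalized 2-value stream v with parameters α, β: the induced allocation is EF2 (i.e., 1-EF2) at the end of every time step T, and EF1 (i.e., 1-EF1) at the end of every even time step T. -/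
open Finset

noncomputable section

/-- The agent to whom good `t` is assigned by the deterministic online algorithm `F` with
foresight `ℓ` on stream `v`: `σ(t) = F [v 0, …, v (t+ℓ)]`. -/
def allocF (n ℓ : ℕ) (F : List (Fin n → NNReal) → Fin n) (v : ℕ → Fin n → NNReal)
    (t : ℕ) : Fin n :=
  F ((List.range (t + ℓ + 1)).map v)

/-- The bundle of agent `i` at the end of time step `T`. -/
def bundleF (n ℓ : ℕ) (F : List (Fin n → NNReal) → Fin n) (v : ℕ → Fin n → NNReal)
    (i : Fin n) (T : ℕ) : Finset ℕ :=
  (Finset.range T).filter fun t => allocF n ℓ F v t = i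

open scoped Classical

namespace S7

def oth (i : Fin 2) : Fin 2 := if i = 0 then 1 else 0

@[simp] lemma oth_zero : oth 0 = 1 := rfl
@[simp] lemma oth_one : oth 1 = 0 := rfl

lemma oth_ne (i : Fin 2) : oth i ≠ i := by fin_cases i <;> decide

def cont0 (v : ℕ → Fin 2 → NNReal) (k : ℕ) : Prop :=
  v (2*k+1) 0 < v (2*k) 0 ∧ v (2*k+1) 1 < v (2*k) 1

def cont1 (v : ℕ → Fin 2 → NNReal) (k : ℕ) : Prop :=
  v (2*k) 0 < v (2*k+1) 0 ∧ v (2*k) 1 < v (2*k+1) 1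

def cont (v : ℕ → Fin 2 → NNReal) (k : ℕ) : Prop := cont0 v k ∨ cont1 v k

def cnt (v : ℕ → Fin 2 → NNReal) (K : ℕ) : ℕ := ((range K).filter (cont v)).card

def getsFirst (v : ℕ → Fin 2 → NNReal) (k : ℕ) : Fin 2 :=
  if cont0 v k then (if cnt v k % 2 = 0 then 0 else 1)
  else if cont1 v k then (if cnt v k % 2 = 0 then 1 else 0)
  else if v (2*k+1) 0 < v (2*k) 0 then 0
  else if v (2*k) 0 < v (2*k+1) 0 then 1
  else if v (2*k+1) 1 < v (2*k) 1 then 1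
  else 0

def sig (v : ℕ → Fin 2 → NNReal) (t : ℕ) : Fin 2 :=
  if t % 2 = 0 then getsFirst v (t/2) else oth (getsFirst v (t/2))

def Falg : List (Fin 2 → NNReal) → Fin 2 := fun l => sig (fun t => l.getD t 0) (l.length - 2)

lemma cont0_congr {v w : ℕ → Fin 2 → NNReal} {k : ℕ}
    (h : ∀ s ≤ 2*k+1, w s = v s) : cont0 w k ↔ cont0 v k := by
  unfold cont0
  rw [h (2*k) (by omega), h (2*k+1) le_rfl]

lemma cont1_congr {v w : ℕ → Fin 2 → NNReal} {k : ℕ}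
    (h : ∀ s ≤ 2*k+1, w s = v s) : cont1 w k ↔ cont1 v k := by
  unfold cont1
  rw [h (2*k) (by omega), h (2*k+1) le_rfl]

lemma cnt_congr {v w : ℕ → Fin 2 → NNReal} {K : ℕ}
    (h : ∀ s ≤ 2*K+1, w s = v s) : cnt w K = cnt v K := by
  unfold cnt
  congr 1
  apply Finset.filter_congr
  intro k hk
  simp only [mem_range] at hk
  have hk' : ∀ s ≤ 2*k+1, w s = v s := fun s hs => h s (by omega)
  unfold cont
  rw [cont0_congr hk', cont1_congr hk']

lemma getsFirst_congr {v w : ℕ → Fin 2 → NNReal} {k : ℕ}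
    (h : ∀ s ≤ 2*k+1, w s = v s) : getsFirst w k = getsFirst v k := by
  unfold getsFirst
  rw [h (2*k) (by omega), h (2*k+1) le_rfl, cnt_congr h]
  by_cases h0 : cont0 v k
  · rw [if_pos ((cont0_congr h).mpr h0), if_pos h0]
  · rw [if_neg (fun hc => h0 ((cont0_congr h).mp hc)), if_neg h0]
    by_cases h1 : cont1 v k
    · rw [if_pos ((cont1_congr h).mpr h1), if_pos h1]
    · rw [if_neg (fun hc => h1 ((cont1_congr h).mp hc)), if_neg h1]

lemma sig_congr {v w : ℕ → Fin 2 → NNReal} {t : ℕ}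
    (h : ∀ s ≤ t+1, w s = v s) : sig w t = sig v t := by
  have hk : ∀ s ≤ 2*(t/2)+1, w s = v s := fun s hs => h s (by omega)
  unfold sig
  rw [getsFirst_congr hk]

lemma alloc_eq_sig (v : ℕ → Fin 2 → NNReal) (t : ℕ) :
    allocF 2 1 Falg v t = sig v t := by
  unfold allocF Falg
  have hlen : ((List.range (t+1+1)).map v).length = t + 2 := by simp
  rw [hlen]
  simp only [Nat.add_sub_cancel]
  apply sig_congr
  intro s hs
  have : s < t + 2 := by omega
  rw [List.getD_eq_getElem?_getD]
  rw [List.getElem?_map]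
  simp [List.getElem?_range this]


lemma fin2_cases (i : Fin 2) : i = 0 ∨ i = 1 := by fin_cases i <;> simp

def Sv (v : ℕ → Fin 2 → NNReal) (i j : Fin 2) (T : ℕ) : ℝ :=
  ∑ t ∈ range T, if sig v t = j then (v t i : ℝ) else 0

lemma bval_eq (v : ℕ → Fin 2 → NNReal) (i j : Fin 2) (T : ℕ) :
    bval 2 v i (bundleF 2 1 Falg v j T) = Sv v i j T := by
  unfold bval bundleF Sv
  rw [Finset.sum_filter]
  refine Finset.sum_congr rfl fun t _ => ?_
  rw [alloc_eq_sig]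

lemma sig_even (v : ℕ → Fin 2 → NNReal) (K : ℕ) : sig v (2*K) = getsFirst v K := by
  unfold sig
  rw [Nat.mul_mod_right, Nat.mul_div_cancel_left _ (by norm_num : 0 < 2)]
  simp

lemma sig_odd (v : ℕ → Fin 2 → NNReal) (K : ℕ) :
    sig v (2*K+1) = oth (getsFirst v K) := by
  unfold sig
  have h1 : (2*K+1) % 2 = 1 := by omega
  have h2 : (2*K+1) / 2 = K := by omega
  rw [h1, h2]
  simp

lemma Sv_pair (v : ℕ → Fin 2 → NNReal) (i j : Fin 2) (K : ℕ) :
    Sv v i j (2*K+2) = Sv v i j (2*K)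
      + (if getsFirst v K = j then (v (2*K) i : ℝ) else 0)
      + (if oth (getsFirst v K) = j then (v (2*K+1) i : ℝ) else 0) := by
  unfold Sv
  rw [show 2*K+2 = (2*K+1)+1 from rfl, Finset.sum_range_succ, Finset.sum_range_succ,
    sig_even, sig_odd]

lemma cnt_succ (v : ℕ → Fin 2 → NNReal) (K : ℕ) :
    cnt v (K+1) = cnt v K + (if cont v K then 1 else 0) := by
  unfold cnt
  rw [Finset.range_add_one, Finset.filter_insert]
  split
  · rw [Finset.card_insert_of_notMem (by simp)]
  · simp

/-- Each agent weakly prefers its assigned good in a non-contested pair. -/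
lemma step_noncont (v : ℕ → Fin 2 → NNReal) (K : ℕ) (hc : ¬ cont v K) (i : Fin 2) :
    if getsFirst v K = i then (v (2*K+1) i : ℝ) ≤ v (2*K) i
    else (v (2*K) i : ℝ) ≤ v (2*K+1) i := by
  have h0 : ¬ cont0 v K := fun h => hc (Or.inl h)
  have h1 : ¬ cont1 v K := fun h => hc (Or.inr h)
  unfold getsFirst
  rw [if_neg h0, if_neg h1]
  unfold cont0 at h0
  unfold cont1 at h1
  by_cases hA : v (2*K+1) 0 < v (2*K) 0
  · rw [if_pos hA]
    fin_cases i
    · simpa using hA.le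
    · have : ¬ v (2*K+1) 1 < v (2*K) 1 := fun h => h0 ⟨hA, h⟩
      simpa using (not_lt.mp this)
  · rw [if_neg hA]
    by_cases hB : v (2*K) 0 < v (2*K+1) 0
    · rw [if_pos hB]
      fin_cases i
      · simpa using hB.le
      · have : ¬ v (2*K) 1 < v (2*K+1) 1 := fun h => h1 ⟨hB, h⟩
        simpa using (not_lt.mp this)
    · rw [if_neg hB]
      by_cases hC : v (2*K+1) 1 < v (2*K) 1
      · rw [if_pos hC]
        fin_cases i
        · simpa using (not_lt.mp hA)
        · simpa using hC.le
      · rw [if_neg hC]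
        fin_cases i
        · simpa using (not_lt.mp hB)
        · simpa using (not_lt.mp hC)

section Main

variable {α β : Fin 2 → NNReal} {v : ℕ → Fin 2 → NNReal}

lemma vals (hβα : ∀ i, β i ≤ α i) (htv : ∀ (t : ℕ) (i : Fin 2), v t i = α i ∨ v t i = β i)
    {t t' : ℕ} {i : Fin 2} (h : v t' i < v t i) : v t i = α i ∧ v t' i = β i := by
  rcases htv t i with h1 | h1 <;> rcases htv t' i with h2 | h2
  · exact absurd (h1 ▸ h2 ▸ h) (lt_irrefl _)
  · exact ⟨h1, h2⟩
  · exact absurd ((h1 ▸ h2 ▸ h).trans_le (hβα i)) (lt_irrefl _)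
  · exact absurd (h1 ▸ h2 ▸ h) (lt_irrefl _)

def Inv (α β : Fin 2 → NNReal) (v : ℕ → Fin 2 → NNReal) (K : ℕ) : Prop :=
  if cnt v K % 2 = 0 then
    Sv v 0 1 (2*K) ≤ Sv v 0 0 (2*K) ∧ Sv v 1 0 (2*K) ≤ Sv v 1 1 (2*K)
  else
    (Sv v 0 1 (2*K) + ((α 0 : ℝ) - β 0) ≤ Sv v 0 0 (2*K)) ∧
    (Sv v 1 0 (2*K) ≤ Sv v 1 1 (2*K) + ((α 1 : ℝ) - β 1)) ∧
    ∃ g < 2*K, sig v g = 0 ∧ v g 1 = α 1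

lemma pairS0 {v : ℕ → Fin 2 → NNReal} {K : ℕ} (hf : getsFirst v K = 0) (i : Fin 2) :
    Sv v i 0 (2*K+2) = Sv v i 0 (2*K) + v (2*K) i ∧
    Sv v i 1 (2*K+2) = Sv v i 1 (2*K) + v (2*K+1) i := by
  rw [Sv_pair, Sv_pair, hf]
  norm_num [oth]

lemma pairS1 {v : ℕ → Fin 2 → NNReal} {K : ℕ} (hf : getsFirst v K = 1) (i : Fin 2) :
    Sv v i 0 (2*K+2) = Sv v i 0 (2*K) + v (2*K+1) i ∧
    Sv v i 1 (2*K+2) = Sv v i 1 (2*K) + v (2*K) i := by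
  rw [Sv_pair, Sv_pair, hf]
  norm_num [oth]

lemma getsFirst_cont0 {v : ℕ → Fin 2 → NNReal} {K : ℕ} (hc0 : cont0 v K) :
    getsFirst v K = if cnt v K % 2 = 0 then 0 else 1 := by
  unfold getsFirst; rw [if_pos hc0]

lemma getsFirst_cont1 {v : ℕ → Fin 2 → NNReal} {K : ℕ} (hc1 : cont1 v K) :
    getsFirst v K = if cnt v K % 2 = 0 then 1 else 0 := by
  have hc0 : ¬ cont0 v K := fun h => absurd hc1.1 (not_lt.mpr h.1.le)
  unfold getsFirst; rw [if_neg hc0, if_pos hc1]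

lemma inv_holds (hβα : ∀ i, β i ≤ α i)
    (htv : ∀ (t : ℕ) (i : Fin 2), v t i = α i ∨ v t i = β i) (K : ℕ) :
    Inv α β v K := by
  have hβα0 : (β 0 : ℝ) ≤ α 0 := NNReal.coe_le_coe.mpr (hβα 0)
  have hβα1 : (β 1 : ℝ) ≤ α 1 := NNReal.coe_le_coe.mpr (hβα 1)
  induction K with
  | zero =>
      unfold Inv cnt Sv
      simp
  | succ K ih =>
      have h2K : 2*(K+1) = 2*K+2 := by ring
      unfold Inv at ih ⊢
      rw [cnt_succ v K, h2K]
      by_cases hc : cont v K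
      · -- contested pair
        rw [if_pos hc]
        by_cases hpar : cnt v K % 2 = 0
        · -- winner is agent 0
          rw [if_pos hpar] at ih
          have hparnew : ¬ ((cnt v K + 1) % 2 = 0) := by omega
          rw [if_neg hparnew]
          obtain ⟨i1, i2⟩ := ih
          rcases hc with hc0 | hc1
          · -- both prefer good 2K; agent 0 gets it
            have hf : getsFirst v K = 0 := by rw [getsFirst_cont0 hc0, if_pos hpar]
            obtain ⟨ha0, hb0⟩ := vals hβα htv hc0.1
            obtain ⟨ha1, hb1⟩ := vals hβα htv hc0.2
            have ra0 : (v (2*K) 0 : ℝ) = α 0 := congrArg NNReal.toReal ha0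
            have rb0 : (v (2*K+1) 0 : ℝ) = β 0 := congrArg NNReal.toReal hb0
            have ra1 : (v (2*K) 1 : ℝ) = α 1 := congrArg NNReal.toReal ha1
            have rb1 : (v (2*K+1) 1 : ℝ) = β 1 := congrArg NNReal.toReal hb1
            obtain ⟨e00, e01⟩ := pairS0 hf 0
            obtain ⟨e10, e11⟩ := pairS0 hf 1
            refine ⟨by rw [e01, e00, ra0, rb0]; linarith,
                    by rw [e10, e11, ra1, rb1]; linarith,
                    ⟨2*K, by omega, by rw [sig_even, hf], ha1⟩⟩
          · -- both prefer good 2K+1; agent 0 gets it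
            have hf : getsFirst v K = 1 := by rw [getsFirst_cont1 hc1, if_pos hpar]
            obtain ⟨hb0, ha0⟩ := vals hβα htv hc1.1
            obtain ⟨hb1, ha1⟩ := vals hβα htv hc1.2
            have ra0 : (v (2*K) 0 : ℝ) = β 0 := congrArg NNReal.toReal ha0
            have rb0 : (v (2*K+1) 0 : ℝ) = α 0 := congrArg NNReal.toReal hb0
            have ra1 : (v (2*K) 1 : ℝ) = β 1 := congrArg NNReal.toReal ha1
            have rb1 : (v (2*K+1) 1 : ℝ) = α 1 := congrArg NNReal.toReal hb1
            obtain ⟨e00, e01⟩ := pairS1 hf 0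
            obtain ⟨e10, e11⟩ := pairS1 hf 1
            refine ⟨by rw [e01, e00, ra0, rb0]; linarith,
                    by rw [e10, e11, ra1, rb1]; linarith,
                    ⟨2*K+1, by omega, by rw [sig_odd, hf]; rfl, hb1⟩⟩
        · -- winner is agent 1
          rw [if_neg hpar] at ih
          have hparnew : (cnt v K + 1) % 2 = 0 := by omega
          rw [if_pos hparnew]
          obtain ⟨i1, i2, -⟩ := ih
          rcases hc with hc0 | hc1
          · have hf : getsFirst v K = 1 := by rw [getsFirst_cont0 hc0, if_neg hpar]
            obtain ⟨ha0, hb0⟩ := vals hβα htv hc0.1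
            obtain ⟨ha1, hb1⟩ := vals hβα htv hc0.2
            have ra0 : (v (2*K) 0 : ℝ) = α 0 := congrArg NNReal.toReal ha0
            have rb0 : (v (2*K+1) 0 : ℝ) = β 0 := congrArg NNReal.toReal hb0
            have ra1 : (v (2*K) 1 : ℝ) = α 1 := congrArg NNReal.toReal ha1
            have rb1 : (v (2*K+1) 1 : ℝ) = β 1 := congrArg NNReal.toReal hb1
            obtain ⟨e00, e01⟩ := pairS1 hf 0
            obtain ⟨e10, e11⟩ := pairS1 hf 1
            exact ⟨by rw [e01, e00, ra0, rb0]; linarith,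
                   by rw [e10, e11, ra1, rb1]; linarith⟩
          · have hf : getsFirst v K = 0 := by rw [getsFirst_cont1 hc1, if_neg hpar]
            obtain ⟨hb0, ha0⟩ := vals hβα htv hc1.1
            obtain ⟨hb1, ha1⟩ := vals hβα htv hc1.2
            have ra0 : (v (2*K) 0 : ℝ) = β 0 := congrArg NNReal.toReal ha0
            have rb0 : (v (2*K+1) 0 : ℝ) = α 0 := congrArg NNReal.toReal hb0
            have ra1 : (v (2*K) 1 : ℝ) = β 1 := congrArg NNReal.toReal ha1
            have rb1 : (v (2*K+1) 1 : ℝ) = α 1 := congrArg NNReal.toReal hb1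
            obtain ⟨e00, e01⟩ := pairS0 hf 0
            obtain ⟨e10, e11⟩ := pairS0 hf 1
            exact ⟨by rw [e01, e00, ra0, rb0]; linarith,
                   by rw [e10, e11, ra1, rb1]; linarith⟩
      · -- non-contested pair
        rw [if_neg hc]
        have hst0 := step_noncont v K hc 0
        have hst1 := step_noncont v K hc 1
        rcases fin2_cases (getsFirst v K) with hf | hf
        · rw [if_pos hf] at hst0
          rw [hf, if_neg (by decide : ¬ ((0:Fin 2) = 1))] at hst1
          obtain ⟨e00, e01⟩ := pairS0 hf 0
          obtain ⟨e10, e11⟩ := pairS0 hf 1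
          split at ih <;> rename_i hpar
          · rw [if_pos (by omega : (cnt v K + 0) % 2 = 0)]
            obtain ⟨i1, i2⟩ := ih
            exact ⟨by rw [e01, e00]; linarith,
                   by rw [e10, e11]; linarith⟩
          · rw [if_neg (by omega : ¬ ((cnt v K + 0) % 2 = 0))]
            obtain ⟨i1, i2, g, hg, hgs, hgv⟩ := ih
            exact ⟨by rw [e01, e00]; linarith,
                   by rw [e10, e11]; linarith,
                   ⟨g, by omega, hgs, hgv⟩⟩
        · rw [hf, if_neg (by decide : ¬ ((1:Fin 2) = 0))] at hst0
          rw [if_pos hf] at hst1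
          obtain ⟨e00, e01⟩ := pairS1 hf 0
          obtain ⟨e10, e11⟩ := pairS1 hf 1
          split at ih <;> rename_i hpar
          · rw [if_pos (by omega : (cnt v K + 0) % 2 = 0)]
            obtain ⟨i1, i2⟩ := ih
            exact ⟨by rw [e01, e00]; linarith,
                   by rw [e10, e11]; linarith⟩
          · rw [if_neg (by omega : ¬ ((cnt v K + 0) % 2 = 0))]
            obtain ⟨i1, i2, g, hg, hgs, hgv⟩ := ih
            exact ⟨by rw [e01, e00]; linarith,
                   by rw [e10, e11]; linarith,
                   ⟨g, by omega, hgs, hgv⟩⟩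

lemma bval_mono (v : ℕ → Fin 2 → NNReal) (i : Fin 2) {B B' : Finset ℕ} (h : B' ⊆ B) :
    bval 2 v i B' ≤ bval 2 v i B :=
  Finset.sum_le_sum_of_subset_of_nonneg h (fun _ _ _ => NNReal.coe_nonneg _)

lemma bundle_mono (v : ℕ → Fin 2 → NNReal) (j : Fin 2) {T T' : ℕ} (h : T ≤ T') :
    bundleF 2 1 Falg v j T ⊆ bundleF 2 1 Falg v j T' :=
  Finset.filter_subset_filter _ (Finset.range_subset_range.mpr h)

lemma ef1_even (hβα : ∀ i, β i ≤ α i)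
    (htv : ∀ (t : ℕ) (i : Fin 2), v t i = α i ∨ v t i = β i) (K : ℕ) (i j : Fin 2) :
    ∃ X ⊆ bundleF 2 1 Falg v j (2*K), X.card ≤ 1 ∧
      bval 2 v i (bundleF 2 1 Falg v j (2*K) \ X) ≤ bval 2 v i (bundleF 2 1 Falg v i (2*K)) := by
  have hβα0 : (β 0 : ℝ) ≤ α 0 := NNReal.coe_le_coe.mpr (hβα 0)
  have hβα1 : (β 1 : ℝ) ≤ α 1 := NNReal.coe_le_coe.mpr (hβα 1)
  by_cases hij : i = j
  · subst hij
    exact ⟨∅, Finset.empty_subset _, by simp, by rw [Finset.sdiff_empty]⟩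
  · have hinv := inv_holds hβα htv (v := v) K
    unfold Inv at hinv
    rcases fin2_cases i with hi | hi <;> rcases fin2_cases j with hj | hj <;>
      subst hi <;> subst hj
    · exact absurd rfl hij
    · refine ⟨∅, Finset.empty_subset _, by simp, ?_⟩
      rw [Finset.sdiff_empty, bval_eq, bval_eq]
      split at hinv
      · exact hinv.1
      · linarith [hinv.1]
    · split at hinv
      · refine ⟨∅, Finset.empty_subset _, by simp, ?_⟩
        rw [Finset.sdiff_empty, bval_eq, bval_eq]
        exact hinv.2
      · obtain ⟨-, h2, g, hg, hgs, hgv⟩ := hinv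
        have hgmem : g ∈ bundleF 2 1 Falg v 0 (2*K) := by
          unfold bundleF
          rw [Finset.mem_filter, Finset.mem_range, alloc_eq_sig]
          exact ⟨hg, hgs⟩
        have hsub : {g} ⊆ bundleF 2 1 Falg v 0 (2*K) :=
          Finset.singleton_subset_iff.mpr hgmem
        refine ⟨{g}, hsub, by simp, ?_⟩
        have hdiff : bval 2 v 1 (bundleF 2 1 Falg v 0 (2*K) \ {g})
            = bval 2 v 1 (bundleF 2 1 Falg v 0 (2*K)) - v g 1 := by
          unfold bval
          rw [Finset.sum_sdiff_eq_sub hsub, Finset.sum_singleton]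
        rw [hdiff, bval_eq, bval_eq]
        have hgv' : (v g 1 : ℝ) = α 1 := congrArg NNReal.toReal hgv
        have hb1 : (0:ℝ) ≤ β 1 := NNReal.coe_nonneg _
        linarith
    · exact absurd rfl hij

lemma reduce (v : ℕ → Fin 2 → NNReal) (K : ℕ) (i j : Fin 2) {k : ℕ}
    (h : ∃ X ⊆ bundleF 2 1 Falg v j (2*K), X.card ≤ k ∧
      bval 2 v i (bundleF 2 1 Falg v j (2*K) \ X) ≤ bval 2 v i (bundleF 2 1 Falg v i (2*K))) :
    ∃ X ⊆ bundleF 2 1 Falg v j (2*K+1), X.card ≤ k+1 ∧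
      bval 2 v i (bundleF 2 1 Falg v j (2*K+1) \ X)
        ≤ bval 2 v i (bundleF 2 1 Falg v i (2*K+1)) := by
  obtain ⟨X, hXsub, hXcard, hXval⟩ := h
  refine ⟨(insert (2*K) X) ∩ bundleF 2 1 Falg v j (2*K+1), Finset.inter_subset_right, ?_, ?_⟩
  · calc ((insert (2*K) X) ∩ bundleF 2 1 Falg v j (2*K+1)).card
        ≤ (insert (2*K) X).card := Finset.card_le_card Finset.inter_subset_left
      _ ≤ X.card + 1 := Finset.card_insert_le _ _
      _ ≤ k + 1 := by omega
  · have hsub2 : bundleF 2 1 Falg v j (2*K+1) \ ((insert (2*K) X) ∩ bundleF 2 1 Falg v j (2*K+1))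
        ⊆ bundleF 2 1 Falg v j (2*K) \ X := by
      intro t ht
      rw [Finset.mem_sdiff] at ht ⊢
      obtain ⟨htb, htn⟩ := ht
      have htn' : t ∉ insert (2*K) X := fun hmem => htn (Finset.mem_inter.mpr ⟨hmem, htb⟩)
      rw [Finset.mem_insert, not_or] at htn'
      refine ⟨?_, htn'.2⟩
      unfold bundleF at htb ⊢
      rw [Finset.mem_filter, Finset.mem_range] at htb ⊢
      exact ⟨by omega, htb.2⟩
    calc bval 2 v i (bundleF 2 1 Falg v j (2*K+1) \ ((insert (2*K) X) ∩ bundleF 2 1 Falg v j (2*K+1)))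
        ≤ bval 2 v i (bundleF 2 1 Falg v j (2*K) \ X) := bval_mono v i hsub2
      _ ≤ bval 2 v i (bundleF 2 1 Falg v i (2*K)) := hXval
      _ ≤ bval 2 v i (bundleF 2 1 Falg v i (2*K+1)) :=
          bval_mono v i (bundle_mono v i (Nat.le_succ _))

end Main

end S7
end

/-- For two agents, there is a deterministic online allocation algorithm with foresight `1`
that, on every personalized `2`-value stream, is EF2 at the end of every time step and EF1 at
the end of every even time step. -/
theorem statement7 (α β : Fin 2 → NNReal) (hβα : ∀ i, β i ≤ α i) :
    ∃ F : List (Fin 2 → NNReal) → Fin 2,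
      ∀ v : ℕ → Fin 2 → NNReal, (∀ (t : ℕ) (i : Fin 2), v t i = α i ∨ v t i = β i) →
        (∀ (T : ℕ) (i j : Fin 2), ∃ X ⊆ bundleF 2 1 F v j T, X.card ≤ 2 ∧
            bval 2 v i (bundleF 2 1 F v j T \ X) ≤ bval 2 v i (bundleF 2 1 F v i T)) ∧
        (∀ T : ℕ, Even T → ∀ i j : Fin 2, ∃ X ⊆ bundleF 2 1 F v j T, X.card ≤ 1 ∧
            bval 2 v i (bundleF 2 1 F v j T \ X) ≤ bval 2 v i (bundleF 2 1 F v i T)) := by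
  refine ⟨S7.Falg, fun v htv => ⟨?_, ?_⟩⟩
  · intro T i j
    rcases Nat.even_or_odd T with hT | hT
    · obtain ⟨K, hK⟩ := hT
      have hTK : T = 2*K := by omega
      subst hTK
      obtain ⟨X, h1, h2, h3⟩ := S7.ef1_even hβα htv K i j
      exact ⟨X, h1, by omega, h3⟩
    · obtain ⟨K, hK⟩ := hT
      subst hK
      obtain ⟨X, h1, h2, h3⟩ := S7.reduce v K i j (S7.ef1_even hβα htv K i j)
      exact ⟨X, h1, by omega, h3⟩
  · intro T hT i j
    obtain ⟨K, hK⟩ := hT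
    have hTK : T = 2*K := by omega
    subst hTK
    exact S7.ef1_even hβα htv K i j
end

section
/- Let n = 2 and let α, β : Fin 2 → ℝ≥0 satisfy β i ≤ α i for both agents i. There exists a deterministic online allocation algorithm with foresight 1 such that for every personalized 2-value stream v with parameters α, β and every even time step T = 2k: |A_1^T| = |A_2^T| = k, and there exist agents i ≠ j with {i, j} = {1, 2} such that v_j(A_j^T) ≥ v_j(A_i^T) and v_i(A_j^T) − v_i(A_i^T) ≤ α i − β i (i.e., at most one of the two agents envies the other, and that agent's envy is at most α i − β i). -/
open Finset

noncomputable section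

namespace St8

/-- who gets good `2m` (the other agent gets `2m+1`); `w` = agent favored in conflicts. -/
def decideP (w : Fin 2) (a b : Fin 2 → NNReal) : Fin 2 :=
  if b 0 < a 0 then (if b 1 < a 1 then w else 0)
  else if a 0 < b 0 then (if a 1 < b 1 then 1 - w else 1)
  else (if b 1 < a 1 then 1 else 0)

/-- envy update after a round where agent `p` gets the `a`-good, the other gets `b`-good. -/
def upd (E : ℝ × ℝ) (p : Fin 2) (a b : Fin 2 → NNReal) : ℝ × ℝ :=
  if p = 0 then (E.1 + ((b 0 : ℝ) - a 0), E.2 + ((a 1 : ℝ) - b 1))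
  else (E.1 + ((a 0 : ℝ) - b 0), E.2 + ((b 1 : ℝ) - a 1))

def envySt (v : ℕ → Fin 2 → NNReal) : ℕ → ℝ × ℝ
  | 0 => (0, 0)
  | m + 1 =>
      let E := envySt v m
      upd E (decideP (if 0 < E.2 then 1 else 0) (v (2 * m)) (v (2 * m + 1)))
        (v (2 * m)) (v (2 * m + 1))

def pickM (v : ℕ → Fin 2 → NNReal) (m : ℕ) : Fin 2 :=
  decideP (if 0 < (envySt v m).2 then 1 else 0) (v (2 * m)) (v (2 * m + 1))

def allocAt (v : ℕ → Fin 2 → NNReal) (t : ℕ) : Fin 2 :=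
  if t % 2 = 0 then pickM v (t / 2) else 1 - pickM v (t / 2)

def Falg : List (Fin 2 → NNReal) → Fin 2 :=
  fun L => allocAt (fun s => L.getD s 0) (L.length - 2)

lemma envySt_congr {v w : ℕ → Fin 2 → NNReal} (m : ℕ) (h : ∀ s, s < 2 * m → v s = w s) :
    envySt v m = envySt w m := by
  induction m with
  | zero => rfl
  | succ m ih =>
      have h1 : ∀ s, s < 2 * m → v s = w s := fun s hs => h s (by omega)
      simp only [envySt, ih h1, h (2*m) (by omega), h (2*m+1) (by omega)]

lemma pickM_congr {v w : ℕ → Fin 2 → NNReal} (m : ℕ) (h : ∀ s, s < 2 * m + 2 → v s = w s) :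
    pickM v m = pickM w m := by
  have h1 : ∀ s, s < 2 * m → v s = w s := fun s hs => h s (by omega)
  simp only [pickM, envySt_congr m h1, h (2*m) (by omega), h (2*m+1) (by omega)]

lemma allocAt_congr {v w : ℕ → Fin 2 → NNReal} (t : ℕ) (h : ∀ s, s < t + 2 → v s = w s) :
    allocAt v t = allocAt w t := by
  have : pickM v (t / 2) = pickM w (t / 2) := pickM_congr _ (fun s hs => h s (by omega))
  simp only [allocAt, this]

lemma allocF_eq (v : ℕ → Fin 2 → NNReal) (t : ℕ) :
    allocF 2 1 Falg v t = allocAt v t := by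
  unfold allocF Falg
  have hlen : ((List.range (t + 1 + 1)).map v).length = t + 2 := by simp
  rw [hlen]
  simp only [Nat.add_sub_cancel]
  refine allocAt_congr t (fun s hs => ?_)
  rw [List.getD_eq_getElem _ _ (by simp only [List.length_map, List.length_range]; omega)]
  simp

lemma bundleF_eq (v : ℕ → Fin 2 → NNReal) (i : Fin 2) (T : ℕ) :
    bundleF 2 1 Falg v i T = (Finset.range T).filter (fun t => allocAt v t = i) := by
  unfold bundleF
  exact Finset.filter_congr (fun t _ => by rw [allocF_eq])

lemma alloc_even (v : ℕ → Fin 2 → NNReal) (k : ℕ) : allocAt v (2 * k) = pickM v k := by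
  simp [allocAt, Nat.mul_mod_right, Nat.mul_div_cancel_left]

lemma alloc_odd (v : ℕ → Fin 2 → NNReal) (k : ℕ) :
    allocAt v (2 * k + 1) = 1 - pickM v k := by
  have h1 : (2 * k + 1) % 2 = 1 := by omega
  have h2 : (2 * k + 1) / 2 = k := by omega
  simp [allocAt, h1, h2]

end St8

namespace St8

lemma fin2_cases (p : Fin 2) : p = 0 ∨ p = 1 := by omega

lemma one_sub_ne (p : Fin 2) : 1 - p ≠ p := by
  rcases fin2_cases p with h | h <;> subst h <;> decide

lemma one_sub_eq_iff (p i : Fin 2) : 1 - p = i ↔ ¬ p = i := by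
  rcases fin2_cases p with h | h <;> rcases fin2_cases i with h' | h' <;>
    subst h <;> subst h' <;> decide

variable (v : ℕ → Fin 2 → NNReal)

/-- the bundle determined by `allocAt`. -/
def B (i : Fin 2) (k : ℕ) : Finset ℕ :=
  (Finset.range (2 * k)).filter (fun t => allocAt v t = i)

lemma B_succ (i : Fin 2) (k : ℕ) :
    B v i (k + 1) = if pickM v k = i then insert (2 * k) (B v i k)
      else insert (2 * k + 1) (B v i k) := by
  have hr : Finset.range (2 * (k + 1)) =
      insert (2 * k + 1) (insert (2 * k) (Finset.range (2 * k))) := by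
    have : 2 * (k + 1) = (2 * k + 1) + 1 := by ring
    rw [this, Finset.range_add_one, Finset.range_add_one]
  unfold B
  rw [hr, Finset.filter_insert, Finset.filter_insert, alloc_even, alloc_odd]
  rcases em (pickM v k = i) with h | h
  · rw [if_neg (fun hc => (one_sub_eq_iff _ _).mp hc h), if_pos h, if_pos h]
  · rw [if_pos ((one_sub_eq_iff _ _).mpr h), if_neg h, if_neg h]

lemma not_mem_B (i : Fin 2) (k : ℕ) (t : ℕ) (ht : 2 * k ≤ t) : t ∉ B v i k := by
  intro h
  have := Finset.mem_filter.mp h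
  have := Finset.mem_range.mp this.1
  omega

lemma card_B (i : Fin 2) (k : ℕ) : (B v i k).card = k := by
  induction k with
  | zero => simp [B]
  | succ k ih =>
      rw [B_succ]
      rcases em (pickM v k = i) with h | h
      · rw [if_pos h, Finset.card_insert_of_notMem (not_mem_B v i k _ le_rfl), ih]
      · rw [if_neg h, Finset.card_insert_of_notMem (not_mem_B v i k _ (by omega)), ih]

lemma envy_eq (k : ℕ) :
    (envySt v k).1 = bval 2 v 0 (B v 1 k) - bval 2 v 0 (B v 0 k) ∧
    (envySt v k).2 = bval 2 v 1 (B v 0 k) - bval 2 v 1 (B v 1 k) := by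
  induction k with
  | zero => simp [envySt, B, bval]
  | succ k ih =>
      have h0 := B_succ v 0 k
      have h1 := B_succ v 1 k
      have key : ∀ (j i : Fin 2) (t : ℕ), 2 * k ≤ t →
          bval 2 v j (insert t (B v i k)) = bval 2 v j (B v i k) + (v t j : ℝ) := by
        intro j i t ht
        unfold bval
        rw [Finset.sum_insert (not_mem_B v i k t ht)]
        ring
      show (envySt v (k+1)).1 = _ ∧ (envySt v (k+1)).2 = _
      have hst : envySt v (k + 1) =
          upd (envySt v k) (pickM v k) (v (2 * k)) (v (2 * k + 1)) := rfl
      rcases fin2_cases (pickM v k) with hp | hp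
      · rw [hst, hp, upd, if_pos rfl]
        rw [hp, if_pos rfl] at h0
        rw [hp, if_neg (by decide)] at h1
        rw [h0, h1]
        rw [key 0 1 (2*k+1) (by omega), key 0 0 (2*k) le_rfl,
            key 1 0 (2*k) le_rfl, key 1 1 (2*k+1) (by omega)]
        constructor
        · simp only []; rw [ih.1]; ring
        · simp only []; rw [ih.2]; ring
      · rw [hst, hp, upd, if_neg (by decide)]
        rw [hp, if_neg (by decide)] at h0
        rw [hp, if_pos rfl] at h1
        rw [h0, h1]
        rw [key 0 1 (2*k) le_rfl, key 0 0 (2*k+1) (by omega),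
            key 1 0 (2*k+1) (by omega), key 1 1 (2*k) le_rfl]
        constructor
        · simp only []; rw [ih.1]; ring
        · simp only []; rw [ih.2]; ring

end St8

namespace St8

lemma step_inv (α β : Fin 2 → NNReal) (hβα : ∀ i, β i ≤ α i)
    (a b : Fin 2 → NNReal) (ha : ∀ i, a i = α i ∨ a i = β i)
    (hb : ∀ i, b i = α i ∨ b i = β i) (E : ℝ × ℝ)
    (h1 : E.1 ≤ (α 0 : ℝ) - β 0) (h2 : E.2 ≤ (α 1 : ℝ) - β 1)
    (h3 : E.1 ≤ 0 ∨ E.2 ≤ 0) :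
    (upd E (decideP (if 0 < E.2 then 1 else 0) a b) a b).1 ≤ (α 0 : ℝ) - β 0 ∧
    (upd E (decideP (if 0 < E.2 then 1 else 0) a b) a b).2 ≤ (α 1 : ℝ) - β 1 ∧
    ((upd E (decideP (if 0 < E.2 then 1 else 0) a b) a b).1 ≤ 0 ∨
     (upd E (decideP (if 0 < E.2 then 1 else 0) a b) a b).2 ≤ 0) := by
  have hd0 : (β 0 : ℝ) ≤ α 0 := by exact_mod_cast hβα 0
  have hd1 : (β 1 : ℝ) ≤ α 1 := by exact_mod_cast hβα 1
  have f1 : ∀ i : Fin 2, b i < a i → (a i : ℝ) = α i ∧ (b i : ℝ) = β i := by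
    intro i h
    rcases ha i with h' | h' <;> rcases hb i with h'' | h'' <;>
      rw [h', h''] at h ⊢ <;> first
        | exact absurd h (lt_irrefl _)
        | exact absurd h (not_lt.mpr (hβα i))
        | exact ⟨rfl, rfl⟩
  have f2 : ∀ i : Fin 2, a i < b i → (a i : ℝ) = β i ∧ (b i : ℝ) = α i := by
    intro i h
    rcases ha i with h' | h' <;> rcases hb i with h'' | h'' <;>
      rw [h', h''] at h ⊢ <;> first
        | exact absurd h (lt_irrefl _)
        | exact absurd h (not_lt.mpr (hβα i))
        | exact ⟨rfl, rfl⟩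
  have f3 : ∀ i : Fin 2, ¬ b i < a i → (a i : ℝ) ≤ b i := by
    intro i h; exact_mod_cast not_lt.mp h
  have f4 : ∀ i : Fin 2, ¬ a i < b i → (b i : ℝ) ≤ a i := by
    intro i h; exact_mod_cast not_lt.mp h
  by_cases hw : 0 < E.2 <;> simp only [hw, if_true, if_false] <;> unfold decideP
  · -- w = 1 : agent 1 is favored (E.2 > 0, hence E.1 ≤ 0)
    have hE1 : E.1 ≤ 0 := h3.resolve_right (not_le.mpr hw)
    by_cases c0 : b 0 < a 0
    · rw [if_pos c0]
      obtain ⟨ea0, eb0⟩ := f1 0 c0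
      by_cases c1 : b 1 < a 1
      · -- conflict on good 2m; agent 1 gets it : p = 1
        rw [if_pos c1]
        obtain ⟨ea1, eb1⟩ := f1 1 c1
        rw [upd, if_neg (by decide)]; dsimp only
        exact ⟨by linarith, by linarith, Or.inr (by linarith)⟩
      · -- p = 0, agent 0 gets its preferred good 2m
        rw [if_neg c1]
        have := f3 1 c1
        rw [upd, if_pos rfl]; dsimp only
        exact ⟨by linarith, by linarith, Or.inl (by linarith)⟩
    · rw [if_neg c0]
      by_cases c0' : a 0 < b 0
      · rw [if_pos c0']
        obtain ⟨ea0, eb0⟩ := f2 0 c0'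
        by_cases c1 : a 1 < b 1
        · -- conflict on good 2m+1: agent 1 gets it, p = 1 - 1 = 0
          rw [if_pos c1]
          obtain ⟨ea1, eb1⟩ := f2 1 c1
          rw [upd, if_pos (by decide)]; dsimp only
          exact ⟨by linarith, by linarith, Or.inr (by linarith)⟩
        · -- p = 1 : agent 0 gets its preferred good 2m+1
          rw [if_neg c1]
          have := f4 1 c1
          rw [upd, if_neg (by decide)]; dsimp only
          exact ⟨by linarith, by linarith, Or.inl (by linarith)⟩
      · -- agent 0 indifferent
        rw [if_neg c0']
        have e0 : (a 0 : ℝ) = b 0 := le_antisymm (f3 0 c0) (f4 0 c0')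
        by_cases c1 : b 1 < a 1
        · rw [if_pos c1]
          obtain ⟨ea1, eb1⟩ := f1 1 c1
          rw [upd, if_neg (by decide)]; dsimp only
          exact ⟨by linarith, by linarith, Or.inr (by linarith)⟩
        · rw [if_neg c1]
          have := f3 1 c1
          rw [upd, if_pos rfl]; dsimp only
          exact ⟨by linarith, by linarith, Or.inl (by linarith)⟩
  · -- w = 0 : agent 0 is favored (E.2 ≤ 0)
    have hE2 : E.2 ≤ 0 := not_lt.mp hw
    by_cases c0 : b 0 < a 0
    · rw [if_pos c0]
      obtain ⟨ea0, eb0⟩ := f1 0 c0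
      by_cases c1 : b 1 < a 1
      · rw [if_pos c1]
        obtain ⟨ea1, eb1⟩ := f1 1 c1
        rw [upd, if_pos rfl]; dsimp only
        exact ⟨by linarith, by linarith, Or.inl (by linarith)⟩
      · rw [if_neg c1]
        have := f3 1 c1
        rw [upd, if_pos rfl]; dsimp only
        exact ⟨by linarith, by linarith, Or.inl (by linarith)⟩
    · rw [if_neg c0]
      by_cases c0' : a 0 < b 0
      · rw [if_pos c0']
        obtain ⟨ea0, eb0⟩ := f2 0 c0'
        by_cases c1 : a 1 < b 1
        · rw [if_pos c1]
          obtain ⟨ea1, eb1⟩ := f2 1 c1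
          rw [upd, if_neg (by decide)]; dsimp only
          exact ⟨by linarith, by linarith, Or.inl (by linarith)⟩
        · rw [if_neg c1]
          have := f4 1 c1
          rw [upd, if_neg (by decide)]; dsimp only
          exact ⟨by linarith, by linarith, Or.inl (by linarith)⟩
      · rw [if_neg c0']
        have e0 : (a 0 : ℝ) = b 0 := le_antisymm (f3 0 c0) (f4 0 c0')
        by_cases c1 : b 1 < a 1
        · rw [if_pos c1]
          obtain ⟨ea1, eb1⟩ := f1 1 c1
          rw [upd, if_neg (by decide)]; dsimp only
          exact ⟨by linarith, by linarith, Or.inr (by linarith)⟩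
        · rw [if_neg c1]
          have := f3 1 c1
          rw [upd, if_pos rfl]; dsimp only
          exact ⟨by linarith, by linarith, Or.inr (by linarith)⟩

lemma envy_inv (α β : Fin 2 → NNReal) (hβα : ∀ i, β i ≤ α i)
    (v : ℕ → Fin 2 → NNReal) (hv : ∀ (t : ℕ) (i : Fin 2), v t i = α i ∨ v t i = β i)
    (k : ℕ) :
    (envySt v k).1 ≤ (α 0 : ℝ) - β 0 ∧ (envySt v k).2 ≤ (α 1 : ℝ) - β 1 ∧
      ((envySt v k).1 ≤ 0 ∨ (envySt v k).2 ≤ 0) := by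
  induction k with
  | zero =>
      have hd0 : (β 0 : ℝ) ≤ α 0 := by exact_mod_cast hβα 0
      have hd1 : (β 1 : ℝ) ≤ α 1 := by exact_mod_cast hβα 1
      have h0 : envySt v 0 = ((0 : ℝ), (0 : ℝ)) := rfl
      rw [h0]
      exact ⟨by dsimp only; linarith, by dsimp only; linarith, Or.inl (by dsimp only; linarith)⟩
  | succ k ih =>
      have := step_inv α β hβα (v (2 * k)) (v (2 * k + 1)) (hv (2 * k)) (hv (2 * k + 1))
        (envySt v k) ih.1 ih.2.1 ih.2.2
      exact this

end St8

/-- For two agents, there is a deterministic online allocation algorithm with foresight `1`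
such that, on every personalized `2`-value stream and every even time step `T = 2k`, both
bundles have exactly `k` goods, and at most one agent envies the other, by at most
`α i − β i`. -/
theorem statement8 (α β : Fin 2 → NNReal) (hβα : ∀ i, β i ≤ α i) :
    ∃ F : List (Fin 2 → NNReal) → Fin 2,
      ∀ v : ℕ → Fin 2 → NNReal, (∀ (t : ℕ) (i : Fin 2), v t i = α i ∨ v t i = β i) →
        ∀ k : ℕ,
          (∀ i : Fin 2, (bundleF 2 1 F v i (2 * k)).card = k) ∧
          ∃ i j : Fin 2, i ≠ j ∧
            bval 2 v j (bundleF 2 1 F v i (2 * k)) ≤ bval 2 v j (bundleF 2 1 F v j (2 * k)) ∧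
            bval 2 v i (bundleF 2 1 F v j (2 * k)) - bval 2 v i (bundleF 2 1 F v i (2 * k)) ≤
              (α i : ℝ) - (β i : ℝ) := by
  refine ⟨St8.Falg, fun v hv k => ?_⟩
  have hB : ∀ i : Fin 2, bundleF 2 1 St8.Falg v i (2 * k) = St8.B v i k :=
    fun i => St8.bundleF_eq v i (2 * k)
  refine ⟨fun i => by rw [hB i]; exact St8.card_B v i k, ?_⟩
  obtain ⟨e1, e2⟩ := St8.envy_eq v k
  obtain ⟨i1, i2, i3⟩ := St8.envy_inv α β hβα v hv k
  rcases i3 with h | h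
  · exact ⟨1, 0, by decide, by rw [hB 0, hB 1]; linarith,
      by rw [hB 0, hB 1]; linarith⟩
  · exact ⟨0, 1, by decide, by rw [hB 0, hB 1]; linarith,
      by rw [hB 0, hB 1]; linarith⟩

end
end

section
/- Let n = 2 and let α, β : Fin 2 → ℝ≥0 satisfy 0 < β i ≤ α i for both agents i. There exists a deterministic online allocation algorithm with foresight 1 such that for every personalized 2-value stream v with parameters α, β and every positive integer λ, there exists T₀ ∈ ℕ such that for every time step T ≥ T₀ the induced allocation is (λ/(λ+2))-EF, (λ/(λ+1))-EF1, and (λ/(λ+1))-PROP. -/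
open Finset

noncomputable section

namespace S9

def ev (a b : NNReal) : ℤ := if a < b then 1 else if b < a then -1 else 0

lemma ev_mem (a b : NNReal) : ev a b = -1 ∨ ev a b = 0 ∨ ev a b = 1 := by
  unfold ev; split_ifs <;> simp

def swapRule (d : ℤ × ℤ) (e0 e1 : ℤ) : Prop :=
  if e0 = 0 ∧ e1 = 0 then False
  else if e1 = 0 then e0 = 1
  else if e0 = 0 then e1 = -1
  else if e0 = e1 then (if d.2 ≤ d.1 then e0 = 1 else e0 = -1)
  else e0 = 1

instance (d : ℤ × ℤ) (e0 e1 : ℤ) : Decidable (swapRule d e0 e1) := by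
  unfold swapRule; infer_instance

def stepd (d : ℤ × ℤ) (e0 e1 : ℤ) : ℤ × ℤ :=
  if swapRule d e0 e1 then (d.1 - e0, d.2 + e1) else (d.1 + e0, d.2 - e1)

def Inv (d : ℤ × ℤ) : Prop := d.1 ≤ 1 ∧ d.2 ≤ 1 ∧ d.1 + d.2 ≤ 0

lemma Inv_step (d : ℤ × ℤ) (e0 e1 : ℤ)
    (h0 : e0 = -1 ∨ e0 = 0 ∨ e0 = 1) (h1 : e1 = -1 ∨ e1 = 0 ∨ e1 = 1)
    (h : Inv d) : Inv (stepd d e0 e1) := by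
  obtain ⟨a, b, c⟩ := h
  unfold stepd swapRule Inv
  split_ifs <;> simp_all <;> omega

def e0v (v : ℕ → Fin 2 → NNReal) (k : ℕ) : ℤ := ev (v (2*k) 0) (v (2*k+1) 0)
def e1v (v : ℕ → Fin 2 → NNReal) (k : ℕ) : ℤ := ev (v (2*k) 1) (v (2*k+1) 1)

def Dst (v : ℕ → Fin 2 → NNReal) : ℕ → ℤ × ℤ
  | 0 => (0, 0)
  | k+1 => stepd (Dst v k) (e0v v k) (e1v v k)

def swp (v : ℕ → Fin 2 → NNReal) (k : ℕ) : Prop := swapRule (Dst v k) (e0v v k) (e1v v k)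

instance (v : ℕ → Fin 2 → NNReal) (k : ℕ) : Decidable (swp v k) := by
  unfold swp; infer_instance

def sig (v : ℕ → Fin 2 → NNReal) (t : ℕ) : Fin 2 :=
  if (swp v (t/2) ↔ t % 2 = 1) then 0 else 1

def Falg : List (Fin 2 → NNReal) → Fin 2 := fun L => sig (fun t => L.getD t 0) (L.length - 2)

lemma Dst_congr (v w : ℕ → Fin 2 → NNReal) (k : ℕ) (h : ∀ s, s < 2*k → v s = w s) :
    Dst v k = Dst w k := by
  induction k with
  | zero => rfl
  | succ k ih =>
    have hk : Dst v k = Dst w k := ih (fun s hs => h s (by omega))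
    have h1 : v (2*k) = w (2*k) := h _ (by omega)
    have h2 : v (2*k+1) = w (2*k+1) := h _ (by omega)
    simp [Dst, e0v, e1v, hk, h1, h2]

lemma sig_congr (v w : ℕ → Fin 2 → NNReal) (t : ℕ) (h : ∀ s, s < t + 2 → v s = w s) :
    sig v t = sig w t := by
  have hd : Dst v (t/2) = Dst w (t/2) := Dst_congr v w _ (fun s hs => h s (by omega))
  have h1 : v (2*(t/2)) = w (2*(t/2)) := h _ (by omega)
  have h2 : v (2*(t/2)+1) = w (2*(t/2)+1) := h _ (by omega)
  simp [sig, swp, e0v, e1v, hd, h1, h2]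
  congr

lemma allocF_eq (v : ℕ → Fin 2 → NNReal) (t : ℕ) : allocF 2 1 Falg v t = sig v t := by
  unfold allocF Falg
  have hlen : ((List.range (t+1+1)).map v).length = t + 2 := by simp
  rw [hlen]
  simp only [Nat.add_sub_cancel]
  exact sig_congr _ v t (fun s hs => by
    simp [List.getD, List.getElem?_map, List.getElem?_range (by omega : s < t + 1 + 1)])

end S9
namespace S9

lemma fin2 (i : Fin 2) : i = 0 ∨ i = 1 := by fin_cases i <;> simp

lemma sig_even (v : ℕ → Fin 2 → NNReal) (k : ℕ) :
    sig v (2*k) = if swp v k then 1 else 0 := by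
  have h1 : (2*k)/2 = k := by omega
  have h2 : ¬ ((2*k) % 2 = 1) := by omega
  unfold sig
  rw [h1]
  by_cases hs : swp v k <;> simp [hs, h2]

lemma sig_odd (v : ℕ → Fin 2 → NNReal) (k : ℕ) :
    sig v (2*k+1) = if swp v k then 0 else 1 := by
  have h1 : (2*k+1)/2 = k := by omega
  have h2 : (2*k+1) % 2 = 1 := by omega
  unfold sig
  rw [h1]
  by_cases hs : swp v k <;> simp [hs, h2]

lemma ev_spec (A B a b : NNReal) (hBA : B ≤ A)
    (ha : a = A ∨ a = B) (hb : b = A ∨ b = B) :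
    (b:ℝ) - (a:ℝ) = ((A:ℝ) - (B:ℝ)) * ((ev a b : ℤ) : ℝ) := by
  by_cases h : a < b
  · have hab : a = B ∧ b = A := by
      constructor
      · rcases ha with rfl|rfl
        · rcases hb with rfl|rfl
          · exact absurd h (lt_irrefl _)
          · exact absurd (h.trans_le hBA) (lt_irrefl _)
        · rfl
      · rcases hb with rfl|rfl
        · rfl
        · rcases ha with rfl|rfl
          · exact absurd (h.trans_le hBA) (lt_irrefl _)
          · exact absurd h (lt_irrefl _)
    have he : ev a b = 1 := by unfold ev; rw [if_pos h]
    rw [he, hab.1, hab.2]; push_cast; ring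
  · by_cases h' : b < a
    · have hab : a = A ∧ b = B := by
        constructor
        · rcases ha with rfl|rfl
          · rfl
          · rcases hb with rfl|rfl
            · exact absurd (h'.trans_le hBA) (lt_irrefl _)
            · exact absurd h' (lt_irrefl _)
        · rcases hb with rfl|rfl
          · rcases ha with rfl|rfl
            · exact absurd h' (lt_irrefl _)
            · exact absurd (h'.trans_le hBA) (lt_irrefl _)
          · rfl
      have he : ev a b = -1 := by unfold ev; rw [if_neg h, if_pos h']
      rw [he, hab.1, hab.2]; push_cast; ring
    · have he : ev a b = 0 := by unfold ev; rw [if_neg h, if_neg h']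
      have hab : a = b := le_antisymm (not_lt.1 h') (not_lt.1 h)
      have : (a:ℝ) = (b:ℝ) := by rw [hab]
      rw [he]; push_cast; linarith

/-- value of agent i for the goods given to j up to time T -/
def val2 (v : ℕ → Fin 2 → NNReal) (i j : Fin 2) (T : ℕ) : ℝ :=
  ∑ t ∈ Finset.range T, if sig v t = j then (v t i : ℝ) else 0

/-- number of goods given to j up to time T -/
def cnt (v : ℕ → Fin 2 → NNReal) (j : Fin 2) (T : ℕ) : ℕ :=
  ∑ t ∈ Finset.range T, if sig v t = j then 1 else 0

end S9
namespace S9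

section Main
variable (α β : Fin 2 → NNReal) (v : ℕ → Fin 2 → NNReal)
variable (hβα : ∀ i, β i ≤ α i) (hv : ∀ (t : ℕ) (i : Fin 2), v t i = α i ∨ v t i = β i)

include hβα hv in
lemma main_ind (k : ℕ) :
    Inv (Dst v k) ∧
    val2 v 0 1 (2*k) - val2 v 0 0 (2*k) = ((α 0:ℝ) - (β 0:ℝ)) * ((Dst v k).1 : ℝ) ∧
    val2 v 1 0 (2*k) - val2 v 1 1 (2*k) = ((α 1:ℝ) - (β 1:ℝ)) * ((Dst v k).2 : ℝ) ∧
    cnt v 0 (2*k) = k ∧ cnt v 1 (2*k) = k := by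
  induction k with
  | zero => simp [Dst, Inv, val2, cnt]
  | succ k ih =>
    obtain ⟨hI, h0, h1, hc0, hc1⟩ := ih
    have hd : Dst v (k+1) = stepd (Dst v k) (e0v v k) (e1v v k) := rfl
    have hInv : Inv (Dst v (k+1)) := by
      rw [hd]; exact Inv_step _ _ _ (ev_mem _ _) (ev_mem _ _) hI
    have hT : 2*(k+1) = (2*k+1)+1 := by ring
    have hval : ∀ i j : Fin 2, val2 v i j (2*(k+1)) =
        val2 v i j (2*k) + (if sig v (2*k) = j then (v (2*k) i : ℝ) else 0)
          + (if sig v (2*k+1) = j then (v (2*k+1) i : ℝ) else 0) := by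
      intro i j
      rw [hT]; unfold val2; rw [Finset.sum_range_succ, Finset.sum_range_succ]
    have hcnt : ∀ j : Fin 2, cnt v j (2*(k+1)) =
        cnt v j (2*k) + (if sig v (2*k) = j then 1 else 0)
          + (if sig v (2*k+1) = j then 1 else 0) := by
      intro j
      rw [hT]; unfold cnt; rw [Finset.sum_range_succ, Finset.sum_range_succ]
    have he0 : (v (2*k+1) 0 : ℝ) - (v (2*k) 0 : ℝ)
        = ((α 0:ℝ) - (β 0:ℝ)) * ((e0v v k : ℤ) : ℝ) :=
      ev_spec _ _ _ _ (hβα 0) (hv (2*k) 0) (hv (2*k+1) 0)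
    have he1 : (v (2*k+1) 1 : ℝ) - (v (2*k) 1 : ℝ)
        = ((α 1:ℝ) - (β 1:ℝ)) * ((e1v v k : ℤ) : ℝ) :=
      ev_spec _ _ _ _ (hβα 1) (hv (2*k) 1) (hv (2*k+1) 1)
    by_cases hs : swp v k
    · have hsd : stepd (Dst v k) (e0v v k) (e1v v k)
          = ((Dst v k).1 - e0v v k, (Dst v k).2 + e1v v k) := if_pos hs
      have hse : sig v (2*k) = 1 := by rw [sig_even, if_pos hs]
      have hso : sig v (2*k+1) = 0 := by rw [sig_odd, if_pos hs]
      refine ⟨hInv, ?_, ?_, ?_, ?_⟩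
      · rw [hval 0 1, hval 0 0, hd, hsd]
        simp only [hse, hso]
        norm_num
        push_cast
        nlinarith [he0, h0]
      · rw [hval 1 0, hval 1 1, hd, hsd]
        simp only [hse, hso]
        norm_num
        push_cast
        nlinarith [he1, h1]
      · rw [hcnt 0, hso, hse, hc0]; norm_num
      · rw [hcnt 1, hso, hse, hc1]; norm_num
    · have hsd : stepd (Dst v k) (e0v v k) (e1v v k)
          = ((Dst v k).1 + e0v v k, (Dst v k).2 - e1v v k) := if_neg hs
      have hse : sig v (2*k) = 0 := by rw [sig_even, if_neg hs]
      have hso : sig v (2*k+1) = 1 := by rw [sig_odd, if_neg hs]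
      refine ⟨hInv, ?_, ?_, ?_, ?_⟩
      · rw [hval 0 1, hval 0 0, hd, hsd]
        simp only [hse, hso]
        norm_num
        push_cast
        nlinarith [he0, h0]
      · rw [hval 1 0, hval 1 1, hd, hsd]
        simp only [hse, hso]
        norm_num
        push_cast
        nlinarith [he1, h1]
      · rw [hcnt 0, hso, hse, hc0]; norm_num
      · rw [hcnt 1, hso, hse, hc1]; norm_num

end Main
end S9
namespace S9
section Cor
variable (α β : Fin 2 → NNReal) (v : ℕ → Fin 2 → NNReal)
variable (hβα : ∀ i, β i ≤ α i) (hv : ∀ (t : ℕ) (i : Fin 2), v t i = α i ∨ v t i = β i)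

lemma val2_nonneg (i j : Fin 2) (T : ℕ) : 0 ≤ val2 v i j T := by
  apply Finset.sum_nonneg; intro t _; positivity

lemma val2_mono (i j : Fin 2) {T T' : ℕ} (h : T ≤ T') : val2 v i j T ≤ val2 v i j T' := by
  apply Finset.sum_le_sum_of_subset_of_nonneg (Finset.range_subset_range.2 h)
  intro t _ _; positivity

include hβα hv in
lemma val2_lb (i : Fin 2) (k : ℕ) : (k : ℝ) * (β i : ℝ) ≤ val2 v i i (2*k) := by
  have h1 : ∀ t ∈ Finset.range (2*k),
      (if sig v t = i then (β i : ℝ) else 0) ≤ (if sig v t = i then (v t i : ℝ) else 0) := by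
    intro t _
    split_ifs
    · rcases hv t i with h|h <;> rw [h]
      exact_mod_cast hβα i
    · exact le_rfl
  calc (k:ℝ) * (β i : ℝ) = ∑ t ∈ Finset.range (2*k), (if sig v t = i then (β i : ℝ) else 0) := by
        rw [← Finset.sum_filter, Finset.sum_const]
        have hcc : ((Finset.range (2*k)).filter (fun t => sig v t = i)).card = k := by
          have hc := (main_ind α β v hβα hv k).2.2.2
          rw [Finset.card_filter]
          rcases fin2 i with rfl|rfl
          · exact hc.1
          · exact hc.2
        rw [hcc, nsmul_eq_mul]
    _ ≤ val2 v i i (2*k) := Finset.sum_le_sum h1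

include hβα hv in
lemma val_le_alpha (t : ℕ) (i : Fin 2) : (v t i : ℝ) ≤ (α i : ℝ) := by
  rcases hv t i with h|h <;> rw [h]
  exact_mod_cast hβα i

include hβα hv in
lemma envy_bound (T : ℕ) :
    (val2 v 0 1 T ≤ val2 v 0 0 T + 2 * (α 0 : ℝ)) ∧
    (val2 v 1 0 T ≤ val2 v 1 1 T + 2 * (α 1 : ℝ)) := by
  have hβ0 : (0:ℝ) ≤ (β 0 : ℝ) := (β 0).2
  have hβ1 : (0:ℝ) ≤ (β 1 : ℝ) := (β 1).2
  have hαβ0 : (β 0 : ℝ) ≤ (α 0 : ℝ) := hβα 0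
  have hαβ1 : (β 1 : ℝ) ≤ (α 1 : ℝ) := hβα 1
  -- even case first
  have heven : ∀ k : ℕ,
      (val2 v 0 1 (2*k) ≤ val2 v 0 0 (2*k) + (α 0 : ℝ)) ∧
      (val2 v 1 0 (2*k) ≤ val2 v 1 1 (2*k) + (α 1 : ℝ)) := by
    intro k
    obtain ⟨⟨i1, i2, i3⟩, h0, h1, -, -⟩ := main_ind α β v hβα hv k
    constructor
    · nlinarith [h0, (show ((Dst v k).1 : ℝ) ≤ 1 by exact_mod_cast i1)]
    · nlinarith [h1, (show ((Dst v k).2 : ℝ) ≤ 1 by exact_mod_cast i2)]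
  rcases Nat.even_or_odd T with ⟨k, hk⟩ | ⟨k, hk⟩
  · have := heven k
    rw [hk]
    constructor
    · calc val2 v 0 1 (k+k) = val2 v 0 1 (2*k) := by ring_nf
        _ ≤ val2 v 0 0 (2*k) + (α 0 : ℝ) := this.1
        _ ≤ val2 v 0 0 (k+k) + 2*(α 0 : ℝ) := by
            have : (0:ℝ) ≤ (α 0 : ℝ) := (α 0).2
            have h2 : (2:ℕ)*k = k + k := by ring
            rw [← h2]; linarith
    · calc val2 v 1 0 (k+k) = val2 v 1 0 (2*k) := by ring_nf
        _ ≤ val2 v 1 1 (2*k) + (α 1 : ℝ) := this.2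
        _ ≤ val2 v 1 1 (k+k) + 2*(α 1 : ℝ) := by
            have : (0:ℝ) ≤ (α 1 : ℝ) := (α 1).2
            have h2 : (2:ℕ)*k = k + k := by ring
            rw [← h2]; linarith
  · have hT : T = 2*k + 1 := hk
    have hsucc : ∀ i j : Fin 2, val2 v i j (2*k+1) =
        val2 v i j (2*k) + (if sig v (2*k) = j then (v (2*k) i : ℝ) else 0) := by
      intro i j; unfold val2; rw [Finset.sum_range_succ]
    have hmono0 : val2 v 0 0 (2*k) ≤ val2 v 0 0 (2*k+1) := val2_mono v 0 0 (by omega)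
    have hmono1 : val2 v 1 1 (2*k) ≤ val2 v 1 1 (2*k+1) := val2_mono v 1 1 (by omega)
    have hub0 : (if sig v (2*k) = (1:Fin 2) then (v (2*k) 0 : ℝ) else 0) ≤ (α 0 : ℝ) := by
      split
      · exact val_le_alpha α β v hβα hv _ 0
      · exact (α 0).2
    have hub1 : (if sig v (2*k) = (0:Fin 2) then (v (2*k) 1 : ℝ) else 0) ≤ (α 1 : ℝ) := by
      split
      · exact val_le_alpha α β v hβα hv _ 1
      · exact (α 1).2
    rw [hT]
    constructor
    · rw [hsucc 0 1]
      have := (heven k).1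
      linarith
    · rw [hsucc 1 0]
      have := (heven k).2
      linarith

include hβα hv in
lemma total_split (i : Fin 2) (T : ℕ) :
    (∑ t ∈ Finset.range T, (v t i : ℝ)) = val2 v i 0 T + val2 v i 1 T := by
  unfold val2
  rw [← Finset.sum_add_distrib]
  apply Finset.sum_congr rfl
  intro t _
  rcases fin2 (sig v t) with h|h <;> simp [h]

lemma bval_bundle_eq (v : ℕ → Fin 2 → NNReal) (i j : Fin 2) (T : ℕ) :
    bval 2 v i (bundleF 2 1 Falg v j T) = val2 v i j T := by
  unfold bval bundleF val2
  rw [Finset.sum_filter]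
  apply Finset.sum_congr rfl
  intro t _
  rw [allocF_eq]

end Cor
end S9
namespace S9

lemma arith (L W C a : ℝ) (hL : 1 ≤ L) (ha : 0 ≤ a) (hW : 2*L*a ≤ W)
    (hC : C ≤ W + 2*a) :
    (L/(L+2))*C ≤ W ∧ (L/(L+1))*C ≤ W ∧ (L/(L+1))/2*(W+C) ≤ W := by
  have hL2 : (0:ℝ) < L + 2 := by linarith
  have hL1 : (0:ℝ) < L + 1 := by linarith
  have hLa : 0 ≤ 2*L*a := by nlinarith
  have hW0 : 0 ≤ W := le_trans hLa hW
  have hkey : L*C ≤ L*W + 2*L*a := by nlinarith [mul_le_mul_of_nonneg_left hC (by linarith : (0:ℝ) ≤ L)]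
  refine ⟨?_, ?_, ?_⟩
  · rw [div_mul_eq_mul_div, div_le_iff₀ hL2]; nlinarith
  · rw [div_mul_eq_mul_div, div_le_iff₀ hL1]; nlinarith
  · rw [div_div, div_mul_eq_mul_div, div_le_iff₀ (by linarith : (0:ℝ) < (L+1)*2)]; nlinarith

end S9


theorem statement9' (α β : Fin 2 → NNReal) (hβ : ∀ i, 0 < β i) (hβα : ∀ i, β i ≤ α i) :
    ∃ F : List (Fin 2 → NNReal) → Fin 2,
      ∀ v : ℕ → Fin 2 → NNReal, (∀ (t : ℕ) (i : Fin 2), v t i = α i ∨ v t i = β i) →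
        ∀ lam : ℕ, 0 < lam →
          ∃ T₀ : ℕ, ∀ T : ℕ, T₀ ≤ T →
            (∀ i j : Fin 2,
              ((lam : ℝ) / ((lam : ℝ) + 2)) * bval 2 v i (bundleF 2 1 F v j T) ≤
                bval 2 v i (bundleF 2 1 F v i T)) ∧
            (∀ i j : Fin 2, ∃ X ⊆ bundleF 2 1 F v j T, X.card ≤ 1 ∧
              ((lam : ℝ) / ((lam : ℝ) + 1)) * bval 2 v i (bundleF 2 1 F v j T \ X) ≤
                bval 2 v i (bundleF 2 1 F v i T)) ∧
            (∀ i : Fin 2,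
              ((lam : ℝ) / ((lam : ℝ) + 1)) / 2 * (∑ t ∈ Finset.range T, (v t i : ℝ)) ≤
                bval 2 v i (bundleF 2 1 F v i T)) := by
  refine ⟨S9.Falg, ?_⟩
  intro v hv lam hlam
  obtain ⟨K, hK⟩ := exists_nat_ge (max ((2*(lam:ℝ)*(α 0:ℝ))/(β 0:ℝ)) ((2*(lam:ℝ)*(α 1:ℝ))/(β 1:ℝ)))
  refine ⟨2*K, ?_⟩
  intro T hT
  have hL : (1:ℝ) ≤ (lam:ℝ) := by exact_mod_cast hlam
  have hα : ∀ i : Fin 2, (0:ℝ) ≤ (α i : ℝ) := fun i => (α i).2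
  have hβ' : ∀ i : Fin 2, (0:ℝ) < (β i : ℝ) := fun i => by exact_mod_cast hβ i
  -- lower bound on own value
  have hW : ∀ i : Fin 2, 2*(lam:ℝ)*(α i:ℝ) ≤ S9.val2 v i i T := by
    intro i
    have h1 : (K:ℝ) ≤ ((T/2 : ℕ):ℝ) := by exact_mod_cast (by omega : K ≤ T/2)
    have h2 := S9.val2_lb α β v hβα hv i (T/2)
    have h3 : S9.val2 v i i (2*(T/2)) ≤ S9.val2 v i i T := S9.val2_mono v i i (by omega)
    have hKi : (2*(lam:ℝ)*(α i:ℝ))/(β i:ℝ) ≤ (K:ℝ) := by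
      rcases S9.fin2 i with rfl|rfl
      · exact le_trans (le_max_left _ _) hK
      · exact le_trans (le_max_right _ _) hK
    rw [div_le_iff₀ (hβ' i)] at hKi
    have h5 : (K:ℝ)*(β i:ℝ) ≤ ((T/2:ℕ):ℝ)*(β i:ℝ) :=
      mul_le_mul_of_nonneg_right h1 (β i).2
    linarith
  have hE := S9.envy_bound α β v hβα hv T
  have hbr : ∀ i j : Fin 2, bval 2 v i (bundleF 2 1 S9.Falg v j T) = S9.val2 v i j T :=
    fun i j => S9.bval_bundle_eq v i j T
  -- the three statements, per agent
  have hmain : ∀ i j : Fin 2,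
      ((lam:ℝ)/((lam:ℝ)+2)) * S9.val2 v i j T ≤ S9.val2 v i i T ∧
      ((lam:ℝ)/((lam:ℝ)+1)) * S9.val2 v i j T ≤ S9.val2 v i i T ∧
      ((lam:ℝ)/((lam:ℝ)+1))/2 * (S9.val2 v i i T + S9.val2 v i j T) ≤ S9.val2 v i i T := by
    intro i j
    by_cases hij : j = i
    · subst hij
      exact S9.arith (lam:ℝ) _ _ _ hL (hα j) (hW j) (by nlinarith [hα j])
    · have hC : S9.val2 v i j T ≤ S9.val2 v i i T + 2*(α i:ℝ) := by
        fin_cases i <;> fin_cases j <;> first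
          | exact absurd rfl hij
          | exact hE.1
          | exact hE.2
      exact S9.arith (lam:ℝ) _ _ _ hL (hα i) (hW i) hC
  refine ⟨?_, ?_, ?_⟩
  · intro i j
    rw [hbr, hbr]
    exact (hmain i j).1
  · intro i j
    refine ⟨∅, Finset.empty_subset _, by simp, ?_⟩
    rw [Finset.sdiff_empty, hbr, hbr]
    exact (hmain i j).2.1
  · intro i
    have hsplit := S9.total_split α β v hβα hv i T
    rw [hbr]
    rcases S9.fin2 i with rfl|rfl
    · rw [hsplit]
      exact (hmain 0 1).2.2
    · rw [hsplit]
      have := (hmain 1 0).2.2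
      linarith [this]

/-- For two agents with `0 < β i ≤ α i`, there is a deterministic online allocation algorithm
with foresight `1` such that, on every personalized `2`-value stream and for every positive
integer `λ`, after some time `T₀` the allocation is `(λ/(λ+2))`-EF, `(λ/(λ+1))`-EF1 and
`(λ/(λ+1))`-PROP at the end of every time step `T ≥ T₀`. -/
theorem statement9 (α β : Fin 2 → NNReal) (hβ : ∀ i, 0 < β i) (hβα : ∀ i, β i ≤ α i) :
    ∃ F : List (Fin 2 → NNReal) → Fin 2,
      ∀ v : ℕ → Fin 2 → NNReal, (∀ (t : ℕ) (i : Fin 2), v t i = α i ∨ v t i = β i) →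
        ∀ lam : ℕ, 0 < lam →
          ∃ T₀ : ℕ, ∀ T : ℕ, T₀ ≤ T →
            (∀ i j : Fin 2,
              ((lam : ℝ) / ((lam : ℝ) + 2)) * bval 2 v i (bundleF 2 1 F v j T) ≤
                bval 2 v i (bundleF 2 1 F v i T)) ∧
            (∀ i j : Fin 2, ∃ X ⊆ bundleF 2 1 F v j T, X.card ≤ 1 ∧
              ((lam : ℝ) / ((lam : ℝ) + 1)) * bval 2 v i (bundleF 2 1 F v j T \ X) ≤
                bval 2 v i (bundleF 2 1 F v i T)) ∧
            (∀ i : Fin 2,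
              ((lam : ℝ) / ((lam : ℝ) + 1)) / 2 * (∑ t ∈ Finset.range T, (v t i : ℝ)) ≤
                bval 2 v i (bundleF 2 1 F v i T)) :=
  statement9' α β hβ hβα

end
end

section
/- Let α ≥ 1 be a real number, M a finite set of goods, and v : M → ℝ a valuation with 1 ≤ v(g) ≤ α for every g ∈ M. Let v̂ be the threshold valuation: v̂(g) = α if v(g) > √α and v̂(g) = √α otherwise, both extended additively to subsets of M. Then for every S ⊆ M: v̂(S)/√α ≤ v(S) ≤ v̂(S), where v(S) = Σ_{g ∈ S} v(g) and v̂(S) = Σ_{g ∈ S} v̂(g). -/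
open Finset

noncomputable section

/-- The threshold valuation associated with `v` and `α`: every value strictly above `√α` is
rounded up to `α` and every other value is rounded up to `√α`. -/
def vhat {G : Type*} (α : ℝ) (v : G → ℝ) (g : G) : ℝ :=
  if Real.sqrt α < v g then α else Real.sqrt α

/-- For a valuation `v` with values in `[1, α]` and its threshold valuation `v̂`, every subset
`S` of goods satisfies `v̂(S)/√α ≤ v(S) ≤ v̂(S)`. -/
theorem statement13 {G : Type*} (α : ℝ) (hα : 1 ≤ α) (M : Finset G) (v : G → ℝ)
    (hv : ∀ g ∈ M, 1 ≤ v g ∧ v g ≤ α) (S : Finset G) (hS : S ⊆ M) :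
    (∑ g ∈ S, vhat α v g) / Real.sqrt α ≤ ∑ g ∈ S, v g ∧
      ∑ g ∈ S, v g ≤ ∑ g ∈ S, vhat α v g := by
  have hs1 : 1 ≤ Real.sqrt α := by
    rw [show (1:ℝ) = Real.sqrt 1 by simp]
    exact Real.sqrt_le_sqrt hα
  have hs0 : 0 < Real.sqrt α := by linarith
  have hsq : Real.sqrt α * Real.sqrt α = α :=
    Real.mul_self_sqrt (by linarith)
  have key : ∀ g ∈ S, v g ≤ vhat α v g ∧ vhat α v g ≤ Real.sqrt α * v g := by
    intro g hg
    obtain ⟨h1, h2⟩ := hv g (hS hg)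
    unfold vhat
    split_ifs with h
    · constructor
      · exact h2
      · calc α = Real.sqrt α * Real.sqrt α := hsq.symm
          _ ≤ Real.sqrt α * v g := by nlinarith
    · push_neg at h
      constructor
      · exact h
      · nlinarith
  constructor
  · rw [div_le_iff₀ hs0]
    calc ∑ g ∈ S, vhat α v g ≤ ∑ g ∈ S, Real.sqrt α * v g :=
          Finset.sum_le_sum fun g hg => (key g hg).2
      _ = (∑ g ∈ S, v g) * Real.sqrt α := by
          rw [← Finset.mul_sum, mul_comm]
  · exact Finset.sum_le_sum fun g hg => (key g hg).1

end
end
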